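/- arXiv:2011.15055 — 5 statements merged into one kernel-verified Lean document; each statement's English description precedes it below -/
import Mathlib

section
/- There exist nonzero real numbers α₁, α₂, α₃, a constant c > 0, and a natural number N such that for every n > N there is a set E of n points in ℝ² containing at least c · n ordered triples (x₁, x₂, x₃) of pairwise distinct points with x₁ · x₂ = α₁, x₂ · x₃ = α₂, and x₃ · x₁ = α₃. -/
open scoped InnerProductSpace

noncomputable section

/-- Points in the plane. -/
abbrev Pt2 : Type := EuclideanSpace ℝ (Fin 2)

/-- The set of dot product `C₃`-configurations (dot product triangles) of type
`(α₁, α₂, α₃)` in a point set `E`: ordered triples of pairwise distinct points of `E`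
with the three prescribed pairwise dot products. -/
def dpTriangles (E : Finset Pt2) (α₁ α₂ α₃ : ℝ) : Set (Pt2 × Pt2 × Pt2) :=
  {x | x.1 ∈ E ∧ x.2.1 ∈ E ∧ x.2.2 ∈ E ∧
    x.1 ≠ x.2.1 ∧ x.1 ≠ x.2.2 ∧ x.2.1 ≠ x.2.2 ∧
    ⟪x.1, x.2.1⟫_ℝ = α₁ ∧ ⟪x.2.1, x.2.2⟫_ℝ = α₂ ∧ ⟪x.2.2, x.1⟫_ℝ = α₃}

noncomputable def fpt (y : ℝ) : Pt2 := (WithLp.equiv 2 (Fin 2 → ℝ)).symm ![1, y]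

lemma fpt_inner (a b : ℝ) : ⟪fpt a, fpt b⟫_ℝ = 1 + a * b := by
  simp [fpt, PiLp.inner_apply, Fin.sum_univ_two, mul_comm, RCLike.inner_apply]

lemma fpt_inj : Function.Injective fpt := by
  intro a b hab
  have := congrArg (fun v => (WithLp.equiv 2 (Fin 2 → ℝ)) v 1) hab
  simpa [fpt] using this

noncomputable def hfun (m j : ℕ) : ℝ :=
  if j = 0 then 0 else if j ≤ m then (j : ℝ) + 1 else ((j : ℝ) - m + 1)⁻¹

lemma hfun_big {m j : ℕ} (h0 : j ≠ 0) (hm : j ≤ m) : hfun m j = (j : ℝ) + 1 := by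
  simp [hfun, h0, hm]

lemma hfun_small {m j : ℕ} (hm : m < j) : hfun m j = ((j : ℝ) - m + 1)⁻¹ := by
  have : j ≠ 0 := by omega
  simp [hfun, this, Nat.not_le.mpr hm]

lemma hfun_base {m j : ℕ} (hm : m < j) : (2 : ℝ) ≤ (j : ℝ) - m + 1 := by
  have : (m : ℝ) + 1 ≤ (j : ℝ) := by exact_mod_cast hm
  linarith

lemma hfun_small_bounds {m j : ℕ} (hm : m < j) :
    0 < hfun m j ∧ hfun m j ≤ 2⁻¹ := by
  rw [hfun_small hm]
  have h2 := hfun_base hm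
  exact ⟨by positivity, inv_anti₀ two_pos h2⟩

lemma hfun_inj (m : ℕ) : Function.Injective (hfun m) := by
  intro a b hab
  rcases eq_or_ne a 0 with ha0 | ha0 <;> rcases eq_or_ne b 0 with hb0 | hb0
  · omega
  · subst ha0
    rcases le_or_gt b m with hb | hb
    · rw [show hfun m 0 = 0 by simp [hfun], hfun_big hb0 hb] at hab
      have : (1:ℝ) ≤ (b:ℝ) := by exact_mod_cast Nat.one_le_iff_ne_zero.mpr hb0
      linarith
    · have := hfun_small_bounds (m := m) hb
      rw [show hfun m 0 = 0 by simp [hfun]] at hab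
      linarith [this.1]
  · subst hb0
    rcases le_or_gt a m with ha | ha
    · rw [show hfun m 0 = 0 by simp [hfun], hfun_big ha0 ha] at hab
      have : (1:ℝ) ≤ (a:ℝ) := by exact_mod_cast Nat.one_le_iff_ne_zero.mpr ha0
      linarith
    · have := hfun_small_bounds (m := m) ha
      rw [show hfun m 0 = 0 by simp [hfun]] at hab
      linarith [this.1]
  · rcases le_or_gt a m with ha | ha <;> rcases le_or_gt b m with hb | hb
    · rw [hfun_big ha0 ha, hfun_big hb0 hb] at hab
      exact_mod_cast add_right_cancel hab
    · rw [hfun_big ha0 ha] at hab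
      have h1 := hfun_small_bounds (m := m) hb
      have : (1:ℝ) ≤ (a:ℝ) := by exact_mod_cast Nat.one_le_iff_ne_zero.mpr ha0
      linarith [h1.2]
    · rw [hfun_big hb0 hb] at hab
      have h1 := hfun_small_bounds (m := m) ha
      have : (1:ℝ) ≤ (b:ℝ) := by exact_mod_cast Nat.one_le_iff_ne_zero.mpr hb0
      linarith [h1.2]
    · rw [hfun_small ha, hfun_small hb] at hab
      have := inv_inj.mp hab
      have : (a:ℝ) = b := by linarith
      exact_mod_cast this

/-- **lower bound in Theorem on dot product triangles.** There exist
nonzero reals `α₁, α₂, α₃`, a constant `c > 0`, and `N` such that for every `n > N` some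
set of `n` points in the plane contains at least `c · n` dot product triangles of type
`(α₁, α₂, α₃)`. -/
theorem dpTriangle_lower_bound :
    ∃ α₁ α₂ α₃ : ℝ, α₁ ≠ 0 ∧ α₂ ≠ 0 ∧ α₃ ≠ 0 ∧
      ∃ c : ℝ, 0 < c ∧ ∃ N : ℕ, ∀ n : ℕ, N < n →
        ∃ E : Finset Pt2, E.card = n ∧
          c * (n : ℝ) ≤ ((dpTriangles E α₁ α₂ α₃).ncard : ℝ) := by
  refine ⟨2, 1, 1, two_ne_zero, one_ne_zero, one_ne_zero, 1/4, by norm_num, 10, ?_⟩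
  classical
  intro n hn
  set m : ℕ := (n - 1) / 2 with hm
  have hmn : 2 * m < n := by omega
  have hm1 : 1 ≤ m := by omega
  set E : Finset Pt2 := (Finset.range n).image (fun j => fpt (hfun m j)) with hE
  have hEcard : E.card = n := by
    rw [hE, Finset.card_image_of_injective _ (show Function.Injective (fun j => fpt (hfun m j)) from fpt_inj.comp (hfun_inj m)), Finset.card_range]
  -- the triangle family
  set T : ℕ → Pt2 × Pt2 × Pt2 :=
    fun i => (fpt ((i : ℝ) + 2), fpt (((i : ℝ) + 2)⁻¹), fpt 0) with hT
  set F : Finset (Pt2 × Pt2 × Pt2) := (Finset.range m).image T with hF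
  have hFcard : F.card = m := by
    rw [hF, Finset.card_image_of_injective, Finset.card_range]
    intro i j hij
    have : fpt ((i : ℝ) + 2) = fpt ((j : ℝ) + 2) := congrArg Prod.fst hij
    have := fpt_inj this
    exact_mod_cast add_right_cancel this
  -- membership facts
  have mem_fpt : ∀ y : ℝ, (∃ j < n, hfun m j = y) → fpt y ∈ E := by
    rintro y ⟨j, hj, rfl⟩
    exact Finset.mem_image.mpr ⟨j, Finset.mem_range.mpr hj, rfl⟩
  have hsub : ↑F ⊆ dpTriangles E 2 1 1 := by
    intro x hx
    simp only [hF, Finset.coe_image, Set.mem_image, Finset.mem_coe,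
      Finset.mem_range] at hx
    obtain ⟨i, hi, rfl⟩ := hx
    have hipos : (0:ℝ) < (i:ℝ) + 2 := by positivity
    have h2le : (2:ℝ) ≤ (i:ℝ) + 2 := by linarith [Nat.cast_nonneg (α := ℝ) i]
    have hinv_le : ((i:ℝ) + 2)⁻¹ ≤ 2⁻¹ := inv_anti₀ two_pos h2le
    have hinv_pos : (0:ℝ) < ((i:ℝ) + 2)⁻¹ := by positivity
    have hne1 : (i:ℝ) + 2 ≠ ((i:ℝ) + 2)⁻¹ := by
      intro h; rw [← h] at hinv_le; linarith
    have hne2 : (i:ℝ) + 2 ≠ 0 := by linarith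
    have hne3 : ((i:ℝ) + 2)⁻¹ ≠ 0 := by linarith
    refine ⟨?_, ?_, ?_, fpt_inj.ne hne1, fpt_inj.ne hne2, fpt_inj.ne hne3, ?_, ?_, ?_⟩
    · refine mem_fpt _ ⟨i + 1, by omega, ?_⟩
      rw [hfun_big (by omega) (by omega)]
      push_cast; ring
    · refine mem_fpt _ ⟨m + i + 1, by omega, ?_⟩
      rw [hfun_small (by omega)]
      push_cast; ring_nf
    · exact mem_fpt _ ⟨0, by omega, by simp [hfun]⟩
    · rw [fpt_inner, mul_inv_cancel₀ hne2]; norm_num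
    · rw [fpt_inner]; ring
    · rw [fpt_inner]; ring
  have hEfin : (dpTriangles E 2 1 1).Finite := by
    apply Set.Finite.subset ((E.finite_toSet.prod (E.finite_toSet.prod E.finite_toSet)))
    intro x hx
    exact ⟨hx.1, hx.2.1, hx.2.2.1⟩
  have hcard_le : (F.card : ℕ) ≤ (dpTriangles E 2 1 1).ncard := by
    calc F.card = (↑F : Set (Pt2 × Pt2 × Pt2)).ncard := (Set.ncard_coe_finset F).symm
    _ ≤ _ := Set.ncard_le_ncard hsub hEfin
  refine ⟨E, hEcard, ?_⟩
  have h4 : n ≤ 4 * m := by omega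
  have : (n : ℝ) ≤ 4 * m := by exact_mod_cast h4
  have hm_le : (m : ℝ) ≤ ((dpTriangles E 2 1 1).ncard : ℝ) := by
    rw [hFcard] at hcard_le; exact_mod_cast hcard_le
  linarith
end
end

section
/- Fix an integer k ≥ 2 and positive real numbers w₁, …, w_k. Then: (i) there is a constant C > 0 such that for every n and every set E of n points in ℝ², the number of (k+1)-tuples (x₀, x₁, …, x_k) of pairwise distinct points of E with ‖x₀ − x_i‖ = w_i for all i = 1, …, k is at most C · n^k; and (ii) there exist a constant c > 0 and N such that for every n > N there is a set E of n points in ℝ² containing at least c · n^k such tuples. In other words, for the k-star G with edge weights w₁, …, w_k, f(G; n) ≈ n^k. -/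
open scoped InnerProductSpace

noncomputable section

/-- The set of distance `k`-star configurations with weights `w` in a point set `E`:
`(k+1)`-tuples `(x 0, x 1, …, x k)` of pairwise distinct points of `E` such that the
distance from the center `x 0` to the `i`-th leaf `x (i+1)` equals `w i`. -/
def distStarConfigs (k : ℕ) (w : Fin k → ℝ) (E : Finset Pt2) : Set (Fin (k + 1) → Pt2) :=
  {x | (∀ i, x i ∈ E) ∧ Function.Injective x ∧ ∀ i : Fin k, ‖x 0 - x i.succ‖ = w i}


lemma pt2_ext {x y : Pt2} (h0 : x 0 = y 0) (h1 : x 1 = y 1) : x = y := by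
  ext i; fin_cases i <;> assumption

lemma pt2_ne {x y : Pt2} (h : x ≠ y) : x 0 ≠ y 0 ∨ x 1 ≠ y 1 := by
  by_contra hc
  push_neg at hc
  exact h (pt2_ext hc.1 hc.2)

lemma sq_norm_expand (x y : Pt2) : ‖x - y‖^2 = (x 0 - y 0)^2 + (x 1 - y 1)^2 := by
  rw [EuclideanSpace.norm_eq, Real.sq_sqrt (by positivity)]
  simp [Fin.sum_univ_two, sq_abs]

/-- Two distinct circles intersect in at most two points. -/
lemma two_circles {a b p q r : Pt2} (hab : a ≠ b)
    (h1 : ‖p - a‖ = ‖q - a‖) (h2 : ‖p - b‖ = ‖q - b‖)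
    (h3 : ‖p - a‖ = ‖r - a‖) (h4 : ‖p - b‖ = ‖r - b‖)
    (hpq : p ≠ q) : r = p ∨ r = q := by
  have E1 : (p 0 - a 0)^2 + (p 1 - a 1)^2 = (q 0 - a 0)^2 + (q 1 - a 1)^2 := by
    rw [← sq_norm_expand, ← sq_norm_expand, h1]
  have E2 : (p 0 - b 0)^2 + (p 1 - b 1)^2 = (q 0 - b 0)^2 + (q 1 - b 1)^2 := by
    rw [← sq_norm_expand, ← sq_norm_expand, h2]
  have E3 : (p 0 - a 0)^2 + (p 1 - a 1)^2 = (r 0 - a 0)^2 + (r 1 - a 1)^2 := by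
    rw [← sq_norm_expand, ← sq_norm_expand, h3]
  have E4 : (p 0 - b 0)^2 + (p 1 - b 1)^2 = (r 0 - b 0)^2 + (r 1 - b 1)^2 := by
    rw [← sq_norm_expand, ← sq_norm_expand, h4]
  set u0 := b 0 - a 0 with hu0
  set u1 := b 1 - a 1 with hu1
  set v0 := q 0 - p 0 with hv0
  set v1 := q 1 - p 1 with hv1
  set w0 := r 0 - p 0 with hw0
  set w1 := r 1 - p 1 with hw1
  have L1 : u0 * v0 + u1 * v1 = 0 := by
    simp only [hu0, hu1, hv0, hv1]; linear_combination (E2 - E1) / 2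
  have L2 : u0 * w0 + u1 * w1 = 0 := by
    simp only [hu0, hu1, hw0, hw1]; linear_combination (E4 - E3) / 2
  have hu : u0 ≠ 0 ∨ u1 ≠ 0 := by
    rcases pt2_ne hab with h | h
    · left; simp only [hu0]; intro hc; exact h (by linarith)
    · right; simp only [hu1]; intro hc; exact h (by linarith)
  have cross : v0 * w1 - v1 * w0 = 0 := by
    rcases hu with h | h
    · have h0 : u0 * (v0 * w1 - v1 * w0) = 0 := by linear_combination w1 * L1 - v1 * L2
      simpa [h] using mul_eq_zero.mp h0
    · have h0 : u1 * (v0 * w1 - v1 * w0) = 0 := by linear_combination v0 * L2 - w0 * L1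
      simpa [h] using mul_eq_zero.mp h0
  -- quadratic step
  have hv : v0 ≠ 0 ∨ v1 ≠ 0 := by
    rcases pt2_ne hpq with h | h
    · left; simp only [hv0]; intro hc; exact h (by linarith)
    · right; simp only [hv1]; intro hc; exact h (by linarith)
  have hVpos : 0 < v0^2 + v1^2 := by
    rcases hv with h | h <;> positivity
  have Q1 : 2*(v0*(p 0 - a 0) + v1*(p 1 - a 1)) + (v0^2 + v1^2) = 0 := by
    simp only [hv0, hv1]; linear_combination -E1
  have Q2 : 2*(w0*(p 0 - a 0) + w1*(p 1 - a 1)) + (w0^2 + w1^2) = 0 := by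
    simp only [hw0, hw1]; linear_combination -E3
  obtain ⟨c, hc0, hc1⟩ : ∃ c : ℝ, w0 = c * v0 ∧ w1 = c * v1 := by
    rcases hv with h | h
    · refine ⟨w0 / v0, (div_mul_cancel₀ w0 h).symm, ?_⟩
      rw [div_mul_eq_mul_div, eq_div_iff h]
      linear_combination cross
    · refine ⟨w1 / v1, ?_, (div_mul_cancel₀ w1 h).symm⟩
      rw [div_mul_eq_mul_div, eq_div_iff h]
      linear_combination -cross
  rw [hc0, hc1] at Q2
  have hcc : (v0^2 + v1^2) * (c * (c - 1)) = 0 := by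
    linear_combination Q2 - c * Q1
  have : c = 0 ∨ c = 1 := by
    rcases mul_eq_zero.mp hcc with h | h
    · exact absurd h (ne_of_gt hVpos)
    · rcases mul_eq_zero.mp h with h | h
      · exact Or.inl h
      · exact Or.inr (by linarith)
  rcases this with h | h
  · left
    apply pt2_ext
    · have : w0 = 0 := by rw [hc0, h]; ring
      simp only [hw0] at this; linarith
    · have : w1 = 0 := by rw [hc1, h]; ring
      simp only [hw1] at this; linarith
  · right
    apply pt2_ext
    · have : w0 = v0 := by rw [hc0, h]; ring
      simp only [hw0, hv0] at this; linarith
    · have : w1 = v1 := by rw [hc1, h]; ring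
      simp only [hw1, hv1] at this; linarith


lemma configs_finite (k : ℕ) (w : Fin k → ℝ) (E : Finset Pt2) :
    (distStarConfigs k w E).Finite := by
  apply (Set.Finite.pi (fun _ : Fin (k+1) => E.finite_toSet)).subset
  intro x hx
  rw [Set.mem_univ_pi]
  intro i
  exact hx.1 i

instance : Infinite Pt2 :=
  Infinite.of_injective (fun t : ℝ => (WithLp.equiv 2 (Fin 2 → ℝ)).symm ![t, 0])
    (fun s t h => by
      have := congrFun (congrArg (WithLp.equiv 2 (Fin 2 → ℝ)) h) 0
      simpa using this)

lemma idx_inj {m i i' j j' : ℕ} (hm : 0 < m) (hj : j < m) (hj' : j' < m)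
    (h : i * m + j = i' * m + j') : i = i' ∧ j = j' := by
  rw [Nat.add_comm (i*m) j, Nat.add_comm (i'*m) j'] at h
  constructor
  · have := congrArg (· / m) h
    simpa [Nat.add_mul_div_right _ _ hm, Nat.div_eq_of_lt hj, Nat.div_eq_of_lt hj'] using this
  · have := congrArg (· % m) h
    simpa [Nat.add_mul_mod_self_right, Nat.mod_eq_of_lt hj, Nat.mod_eq_of_lt hj'] using this

lemma center_eq {k : ℕ} {x y : Fin (k+1) → Pt2} (h0 : x 0 = y 0)
    (hs : x ∘ Fin.succ = y ∘ Fin.succ) : x = y := by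
  funext i
  cases i using Fin.cases with
  | zero => exact h0
  | succ i => exact congrFun hs i

lemma upper_bound (k : ℕ) (hk : 2 ≤ k) (w : Fin k → ℝ) (E : Finset Pt2) :
    (distStarConfigs k w E).ncard ≤ 2 * E.card ^ k := by
  classical
  have hfin := configs_finite k w E
  rw [Set.ncard_eq_toFinset_card _ hfin]
  set F := hfin.toFinset with hF
  set f : (Fin (k+1) → Pt2) → (Fin k → Pt2) := fun x => x ∘ Fin.succ with hf
  have hmemF : ∀ x, x ∈ F ↔ x ∈ distStarConfigs k w E := fun x => hfin.mem_toFinset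
  have key : F.card ≤ 2 * (F.image f).card := by
    apply Finset.card_le_mul_card_image
    intro b hb
    by_contra hgt
    push_neg at hgt
    obtain ⟨x, hx, y, hy, z, hz, hxy, hxz, hyz⟩ := Finset.two_lt_card.mp hgt
    rw [Finset.mem_filter] at hx hy hz
    have hxC := (hmemF x).mp hx.1
    have hyC := (hmemF y).mp hy.1
    have hzC := (hmemF z).mp hz.1
    have hfxy : f x = f y := hx.2.trans hy.2.symm
    have hfxz : f x = f z := hx.2.trans hz.2.symm
    set i0 : Fin k := ⟨0, by omega⟩ with hi0
    set i1 : Fin k := ⟨1, by omega⟩ with hi1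
    have hab : x i0.succ ≠ x i1.succ := by
      intro hc
      have := hxC.2.1 hc
      simp [hi0, hi1, Fin.ext_iff] at this
    have leaf : ∀ u : Fin (k+1) → Pt2, f x = f u → ∀ i : Fin k, u i.succ = x i.succ := by
      intro u hu i
      exact (congrFun hu i).symm
    have d1 : ∀ (u : Fin (k+1) → Pt2), u ∈ distStarConfigs k w E → f x = f u →
        ‖u 0 - x i0.succ‖ = w i0 ∧ ‖u 0 - x i1.succ‖ = w i1 := by
      intro u huC hu
      constructor
      · rw [← leaf u hu i0]; exact huC.2.2 i0
      · rw [← leaf u hu i1]; exact huC.2.2 i1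
    obtain ⟨dx0, dx1⟩ := d1 x hxC rfl
    obtain ⟨dy0, dy1⟩ := d1 y hyC hfxy
    obtain ⟨dz0, dz1⟩ := d1 z hzC hfxz
    have hxy0 : x 0 ≠ y 0 := fun hc => hxy (center_eq hc hfxy)
    have := two_circles hab (dx0.trans dy0.symm) (dx1.trans dy1.symm)
      (dx0.trans dz0.symm) (dx1.trans dz1.symm) hxy0
    rcases this with h | h
    · exact hxz (center_eq h.symm hfxz)
    · exact hyz (center_eq h.symm (hfxy.symm.trans hfxz))
  have himg : (F.image f).card ≤ E.card ^ k := by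
    have hsub : F.image f ⊆ Fintype.piFinset (fun _ : Fin k => E) := by
      intro y hy
      obtain ⟨x, hx, rfl⟩ := Finset.mem_image.mp hy
      rw [Fintype.mem_piFinset]
      intro i
      exact ((hmemF x).mp hx).1 i.succ
    calc (F.image f).card ≤ (Fintype.piFinset (fun _ : Fin k => E)).card :=
          Finset.card_le_card hsub
      _ = E.card ^ k := by
          rw [Fintype.card_piFinset]
          simp
  calc F.card ≤ 2 * (F.image f).card := key
    _ ≤ 2 * E.card ^ k := by omega

lemma lower_bound (k : ℕ) (hk : 2 ≤ k) (w : Fin k → ℝ) (hw : ∀ i, 0 < w i)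
    (n : ℕ) (hn : 4 * k < n) :
    ∃ E : Finset Pt2, E.card = n ∧ (n / (2*k)) ^ k ≤ (distStarConfigs k w E).ncard := by
  classical
  set m : ℕ := n / (2*k) with hmdef
  have hk0 : 0 < k := by omega
  have hm : 0 < m := by
    rw [hmdef]
    exact Nat.div_pos (by omega) (by omega)
  have hkm : 2 * (k * m) ≤ n := by
    have := Nat.div_mul_le_self n (2*k)
    calc 2 * (k * m) = m * (2 * k) := by ring
      _ ≤ n := Nat.div_mul_le_self n (2*k)
  -- angles
  set D : ℝ := ((k * m + 1 : ℕ) : ℝ) with hD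
  have hDpos : (0:ℝ) < D := by rw [hD]; positivity
  set θ : Fin k → Fin m → ℝ := fun i j =>
    (Real.pi / 2) * (((i : ℕ) * m + (j : ℕ) + 1 : ℕ) : ℝ) / D with hθ
  have hθmem : ∀ i j, θ i j ∈ Set.Icc (0:ℝ) Real.pi := by
    intro i j
    constructor
    · rw [hθ]
      positivity
    · rw [hθ]
      rw [div_le_iff₀ hDpos]
      have hnum : (((i : ℕ) * m + (j : ℕ) + 1 : ℕ) : ℝ) ≤ D := by
        rw [hD]
        have : (i : ℕ) * m + (j : ℕ) + 1 ≤ k * m + 1 := by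
          have h1 : (i : ℕ) * m ≤ (k - 1) * m := Nat.mul_le_mul_right m (by omega)
          have h2 : (k-1) * m + m = k * m := by
            cases k with
            | zero => omega
            | succ k' => simp [Nat.succ_mul]
          have := j.isLt
          omega
        exact_mod_cast this
      nlinarith [Real.pi_pos, hnum]
  have hθinj : ∀ i j i' j', θ i j = θ i' j' → i = i' ∧ j = j' := by
    intro i j i' j' h
    rw [hθ] at h
    simp only [div_eq_div_iff (ne_of_gt hDpos) (ne_of_gt hDpos)] at h
    have h2 := mul_right_cancel₀ (ne_of_gt hDpos) h
    have hA := mul_left_cancel₀ (by positivity : (Real.pi/2) ≠ 0) h2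
    have hnat : (i : ℕ) * m + (j : ℕ) + 1 = (i' : ℕ) * m + (j' : ℕ) + 1 := by exact_mod_cast hA
    obtain ⟨h1', h2'⟩ := idx_inj (i := (i:ℕ)) (i' := (i':ℕ)) hm j.isLt j'.isLt (by omega)
    exact ⟨Fin.ext h1', Fin.ext h2'⟩
  -- points
  set q : Fin k → Fin m → Pt2 := fun i j =>
    (WithLp.equiv 2 (Fin 2 → ℝ)).symm ![w i * Real.cos (θ i j), w i * Real.sin (θ i j)] with hq
  have hq0 : ∀ i j, (q i j) 0 = w i * Real.cos (θ i j) := fun i j => rfl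
  have hqnorm : ∀ i j, ‖q i j‖ = w i := by
    intro i j
    rw [hq, EuclideanSpace.norm_eq]
    simp only [Fin.sum_univ_two]
    have e0 : ((WithLp.equiv 2 (Fin 2 → ℝ)).symm
        ![w i * Real.cos (θ i j), w i * Real.sin (θ i j)] : Pt2) 0 = w i * Real.cos (θ i j) := rfl
    have e1 : ((WithLp.equiv 2 (Fin 2 → ℝ)).symm
        ![w i * Real.cos (θ i j), w i * Real.sin (θ i j)] : Pt2) 1 = w i * Real.sin (θ i j) := rfl
    rw [e0, e1]
    have : ‖w i * Real.cos (θ i j)‖ ^ 2 + ‖w i * Real.sin (θ i j)‖ ^ 2 = (w i)^2 := by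
      rw [Real.norm_eq_abs, Real.norm_eq_abs, sq_abs, sq_abs]
      nlinarith [Real.sin_sq_add_cos_sq (θ i j)]
    rw [this, Real.sqrt_sq (hw i).le]
  have hqne0 : ∀ i j, q i j ≠ 0 := by
    intro i j hc
    have := hqnorm i j
    rw [hc, norm_zero] at this
    exact (hw i).ne this
  have hqinj : ∀ i j i' j', q i j = q i' j' → i = i' ∧ j = j' := by
    intro i j i' j' h
    have hwij : w i = w i' := by
      rw [← hqnorm i j, ← hqnorm i' j', h]
    have hcos : Real.cos (θ i j) = Real.cos (θ i' j') := by
      have h0 := congrFun (congrArg (WithLp.equiv 2 (Fin 2 → ℝ)) h) 0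
      have e0 : w i * Real.cos (θ i j) = w i' * Real.cos (θ i' j') := h0
      rw [← hwij] at e0
      exact mul_left_cancel₀ (hw i).ne' e0
    exact hθinj i j i' j' (Real.injOn_cos (hθmem i j) (hθmem i' j') hcos)
  -- base finset
  set E₀ : Finset Pt2 :=
    insert (0 : Pt2) ((Finset.univ : Finset (Fin k × Fin m)).image fun p => q p.1 p.2) with hE₀
  have hE₀card : E₀.card ≤ n := by
    calc E₀.card ≤ ((Finset.univ : Finset (Fin k × Fin m)).image fun p => q p.1 p.2).card + 1 :=
          Finset.card_insert_le _ _
      _ ≤ (Finset.univ : Finset (Fin k × Fin m)).card + 1 :=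
          Nat.add_le_add_right (Finset.card_image_le) 1
      _ = k * m + 1 := by simp
      _ ≤ n := by omega
  obtain ⟨E, hE₀E, hEcard⟩ := Infinite.exists_superset_card_eq E₀ n hE₀card
  refine ⟨E, hEcard, ?_⟩
  -- the injection
  set g : (Fin k → Fin m) → (Fin (k+1) → Pt2) :=
    fun j => Fin.cases (0 : Pt2) (fun i => q i (j i)) with hg
  have hg0 : ∀ j, g j 0 = 0 := fun j => rfl
  have hgs : ∀ j i, g j (Fin.succ i) = q i (j i) := fun j i => by
    rw [hg]; exact Fin.cases_succ _
  have hmem : ∀ j, g j ∈ distStarConfigs k w E := by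
    intro j
    refine ⟨?_, ?_, ?_⟩
    · intro i
      cases i using Fin.cases with
      | zero =>
          rw [hg0]
          exact hE₀E (Finset.mem_insert_self _ _)
      | succ i =>
          rw [hgs]
          apply hE₀E
          rw [hE₀]
          exact Finset.mem_insert_of_mem (Finset.mem_image.mpr ⟨(i, j i), Finset.mem_univ _, rfl⟩)
    · intro s t hst
      cases s using Fin.cases with
      | zero =>
          cases t using Fin.cases with
          | zero => rfl
          | succ t' =>
              rw [hg0, hgs] at hst
              exact absurd hst.symm (hqne0 t' (j t'))
      | succ s' =>
          cases t using Fin.cases with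
          | zero =>
              rw [hg0, hgs] at hst
              exact absurd hst (hqne0 s' (j s'))
          | succ t' =>
              rw [hgs, hgs] at hst
              exact congrArg Fin.succ (hqinj _ _ _ _ hst).1
    · intro i
      rw [hg0, hgs, zero_sub, norm_neg, hqnorm]
  have hginj : Function.Injective g := by
    intro j j' h
    funext i
    have := congrFun h (Fin.succ i)
    rw [hgs, hgs] at this
    exact (hqinj _ _ _ _ this).2
  have hrange : Set.range g ⊆ distStarConfigs k w E := by
    rintro _ ⟨j, rfl⟩
    exact hmem j
  have hcount : (Set.range g).ncard = m ^ k := by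
    rw [← Set.image_univ, Set.ncard_image_of_injective _ hginj, Set.ncard_univ,
      Nat.card_eq_fintype_card, Fintype.card_fun]
    simp
  calc m ^ k = (Set.range g).ncard := hcount.symm
    _ ≤ (distStarConfigs k w E).ncard := Set.ncard_le_ncard hrange (configs_finite k w E)

/-- **distance `k`-stars in the plane.** Fix `k ≥ 2` and positive weights
`w₁, …, w_k`.  (i) There is `C > 0` such that every set of `n` points in the plane has at
most `C · n^k` distance `k`-star configurations; (ii) there are `c > 0` and `N` such that
for every `n > N` some set of `n` points in the plane has at least `c · n^k` of them. -/
theorem distance_kStar_bounds (k : ℕ) (hk : 2 ≤ k) (w : Fin k → ℝ) (hw : ∀ i, 0 < w i) :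
    (∃ C : ℝ, 0 < C ∧ ∀ (n : ℕ) (E : Finset Pt2), E.card = n →
      ((distStarConfigs k w E).ncard : ℝ) ≤ C * (n : ℝ) ^ k) ∧
    (∃ c : ℝ, 0 < c ∧ ∃ N : ℕ, ∀ n : ℕ, N < n →
      ∃ E : Finset Pt2, E.card = n ∧
        c * (n : ℝ) ^ k ≤ ((distStarConfigs k w E).ncard : ℝ)) := by
  constructor
  · refine ⟨2, by norm_num, ?_⟩
    intro n E hE
    have h := upper_bound k hk w E
    rw [hE] at h
    calc ((distStarConfigs k w E).ncard : ℝ) ≤ ((2 * n ^ k : ℕ) : ℝ) := by exact_mod_cast h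
      _ = 2 * (n : ℝ) ^ k := by push_cast; ring
  · refine ⟨(1 / (4 * (k:ℝ))) ^ k, by positivity, 4 * k, ?_⟩
    intro n hn
    obtain ⟨E, hEc, hcount⟩ := lower_bound k hk w hw n hn
    refine ⟨E, hEc, ?_⟩
    set m : ℕ := n / (2 * k) with hmdef
    have hkpos : (0:ℝ) < (k:ℝ) := by
      have : 0 < k := by omega
      exact_mod_cast this
    have hd : 2 * k * m + n % (2 * k) = n := by
      rw [hmdef]; exact Nat.div_add_mod n (2 * k)
    have hmod : n % (2 * k) < 2 * k := Nat.mod_lt n (by omega)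
    have c1 : (n : ℝ) < 2 * (k:ℝ) * (m:ℝ) + 2 * (k:ℝ) := by
      have : n < 2 * k * m + 2 * k := by omega
      exact_mod_cast this
    have c2 : 4 * (k:ℝ) < (n:ℝ) := by exact_mod_cast hn
    have hmR : (n : ℝ) / (4 * (k:ℝ)) ≤ (m : ℝ) := by
      rw [div_le_iff₀ (by positivity)]
      nlinarith
    calc (1 / (4 * (k:ℝ))) ^ k * (n : ℝ) ^ k
        = ((n : ℝ) / (4 * (k:ℝ))) ^ k := by
          rw [← mul_pow]; congr 1; ring
      _ ≤ ((m : ℝ)) ^ k := pow_le_pow_left₀ (by positivity) hmR k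
      _ ≤ ((distStarConfigs k w E).ncard : ℝ) := by exact_mod_cast hcount
end
end

section
/- Fix integers c ≥ 2 and h ≥ 1, and let w be any assignment of positive real weights to the edges of the perfect c-ary tree T_{c,h}. Then f(T_{c,h}; n) ≈ n^(c^h): there is a constant C > 0 such that every set of n points in ℝ² contains at most C · n^(c^h) distance T_{c,h}-configurations, and there exist a constant c' > 0 and N such that for every n > N some set of n points in ℝ² contains at least c' · n^(c^h) distance T_{c,h}-configurations. -/
open scoped InnerProductSpace

noncomputable section

/-- The vertex set of the perfect `c`-ary rooted tree `T_{c,h}` of height `h`: a vertex is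
a list of child-selectors of length at most `h` (the root is the empty list, and the
leaves are the lists of length exactly `h`).  Every vertex at depth `< h` has exactly `c`
children, and there are `c ^ h` leaves. -/
def TreeVert (c h : ℕ) : Type := {l : List (Fin c) // l.length ≤ h}

/-- Adjacency in the perfect `c`-ary tree `T_{c,h}`: a vertex is adjacent precisely to its
parent and to its children. -/
def treeAdj (c h : ℕ) (u v : TreeVert c h) : Prop :=
  (∃ i : Fin c, u.1 = i :: v.1) ∨ (∃ i : Fin c, v.1 = i :: u.1)

/-- The set of distance `T_{c,h}`-configurations in a point set `E`, for an edge-weight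
function `w`: injective maps `φ` from the vertices of `T_{c,h}` into `E` such that the
distance between the images of any two adjacent vertices equals the weight of the
corresponding edge. -/
def distTreeConfigs (c h : ℕ) (w : TreeVert c h → TreeVert c h → ℝ) (E : Finset Pt2) :
    Set (TreeVert c h → Pt2) :=
  {φ | (∀ v, φ v ∈ E) ∧ Function.Injective φ ∧
    ∀ u v, treeAdj c h u v → ‖φ u - φ v‖ = w u v}


lemma two_circles_s7 (a b : Pt2) (hab : a ≠ b) (r s : ℝ) :
    ∃ p q : Pt2, {x : Pt2 | dist x a = r ∧ dist x b = s} ⊆ {p, q} := by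
  set S : Set Pt2 := {x : Pt2 | dist x a = r ∧ dist x b = s} with hS
  have key : ∀ x ∈ S, ∀ y ∈ S, ∀ z ∈ S, x = y ∨ x = z ∨ y = z := by
    intro x hx y hy z hz
    by_contra hcon
    push_neg at hcon
    obtain ⟨hxy, hxz, hyz⟩ := hcon
    have hcos : EuclideanGeometry.Cospherical S := ⟨a, r, fun p hp => hp.1⟩
    have hai : AffineIndependent ℝ ![x, y, z] :=
      hcos.affineIndependent_of_mem_of_ne hx hy hz hxy hxz hyz
    rw [affineIndependent_iff_not_collinear] at hai
    apply hai
    have hsub : Set.range ![x, y, z] = {x, y, z} := by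
      ext p
      constructor
      · rintro ⟨i, rfl⟩
        fin_cases i <;> simp
      · rintro (rfl | rfl | rfl)
        exacts [⟨0, rfl⟩, ⟨1, rfl⟩, ⟨2, rfl⟩]
    rw [hsub]
    -- all differences are orthogonal to a - b
    have horth : ∀ u ∈ S, ∀ v ∈ S, ⟪a - b, u - v⟫_ℝ = 0 := by
      intro u hu v hv
      have := EuclideanGeometry.inner_vsub_vsub_of_dist_eq_of_dist_eq
        (hv.2.trans hu.2.symm) (hv.1.trans hu.1.symm)
      simpa [vsub_eq_sub] using this
    set W : Submodule ℝ Pt2 := (ℝ ∙ (a - b))ᗮ with hW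
    have hd : a - b ≠ 0 := sub_ne_zero.mpr hab
    have hWrank : Module.finrank ℝ W ≤ 1 := by
      have h1 : Module.finrank ℝ (ℝ ∙ (a - b)) = 1 := finrank_span_singleton hd
      have h2 := Submodule.finrank_add_finrank_orthogonal (K := (ℝ ∙ (a - b))) (𝕜 := ℝ)
      rw [h1, finrank_euclideanSpace_fin, ← hW] at h2
      omega
    obtain ⟨v, hv⟩ := (Submodule.finrank_le_one_iff_isPrincipal W).mp hWrank
    have hmemW : ∀ u ∈ S, ∀ t ∈ S, (u - t) ∈ W := by
      intro u hu t ht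
      rw [hW, Submodule.mem_orthogonal]
      intro m hm
      rw [Submodule.mem_span_singleton] at hm
      obtain ⟨cc, rfl⟩ := hm
      rw [real_inner_smul_left, horth u hu t ht, mul_zero]
    rw [collinear_iff_of_mem (Set.mem_insert x _)]
    refine ⟨v, ?_⟩
    intro p hp
    have hpS : p ∈ S := by
      rcases hp with rfl | rfl | rfl
      exacts [hx, hy, hz]
    have : p - x ∈ W := hmemW p hpS x hx
    rw [hv] at this
    rw [Submodule.mem_span_singleton] at this
    obtain ⟨t, ht⟩ := this
    exact ⟨t, by rw [ht, vadd_eq_add, sub_add_cancel]⟩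
  -- extract two points
  by_cases h1 : S.Nonempty
  · obtain ⟨p, hp⟩ := h1
    by_cases h2 : (S \ {p}).Nonempty
    · obtain ⟨q, hq, hqp⟩ := h2
      refine ⟨p, q, fun x hx => ?_⟩
      rcases key x hx p hp q hq with rfl | rfl | h
      · exact Or.inl rfl
      · exact Or.inr rfl
      · exact absurd h.symm hqp
    · refine ⟨p, p, fun x hx => ?_⟩
      rw [Set.not_nonempty_iff_eq_empty, Set.diff_eq_empty] at h2
      simpa using h2 hx
  · rw [Set.not_nonempty_iff_eq_empty] at h1
    exact ⟨0, 0, by rw [h1]; exact Set.empty_subset _⟩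

instance TreeVert.finite (c h : ℕ) : Finite (TreeVert c h) :=
  (List.finite_length_le (α := Fin c) (n := h)).to_subtype

/-- the two candidate intersection points of two circles -/
noncomputable def pr (p q : Pt2) (r s : ℝ) : Pt2 × Pt2 :=
  @dite _ (p = q) (Classical.propDecidable _) (fun _ => (0, 0))
    (fun hpq => ((two_circles_s7 p q hpq r s).choose, (two_circles_s7 p q hpq r s).choose_spec.choose))

lemma pr_spec (p q : Pt2) (hpq : p ≠ q) (r s : ℝ) :
    {x : Pt2 | dist x p = r ∧ dist x q = s} ⊆ {(pr p q r s).1, (pr p q r s).2} := by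
  rw [pr, dif_neg hpq]
  exact (two_circles_s7 p q hpq r s).choose_spec.choose_spec

def child (c h : ℕ) (v : TreeVert c h) (i : Fin c) (hl : v.1.length < h) : TreeVert c h :=
  ⟨i :: v.1, by simpa using hl⟩

def bitOf (c h : ℕ) (w : TreeVert c h → TreeVert c h → ℝ)
    (φ : TreeVert c h → Pt2) (v : TreeVert c h) : Prop :=
  ∀ (hl : v.1.length < h) (hc : 2 ≤ c),
    φ v = (pr (φ (child c h v ⟨0, by omega⟩ hl)) (φ (child c h v ⟨1, by omega⟩ hl))
      (w (child c h v ⟨0, by omega⟩ hl) v) (w (child c h v ⟨1, by omega⟩ hl) v)).1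

lemma config_ext (c h : ℕ) (hc : 2 ≤ c) (w : TreeVert c h → TreeVert c h → ℝ)
    (φ ψ : TreeVert c h → Pt2)
    (hφi : Function.Injective φ)
    (hφd : ∀ u v, treeAdj c h u v → ‖φ u - φ v‖ = w u v)
    (hψd : ∀ u v, treeAdj c h u v → ‖ψ u - ψ v‖ = w u v)
    (hleaf : ∀ v : TreeVert c h, v.1.length = h → φ v = ψ v)
    (hbit : ∀ v, bitOf c h w φ v = bitOf c h w ψ v) : φ = ψ := by
  funext v
  suffices H : ∀ m : ℕ, ∀ v : TreeVert c h, h - v.1.length ≤ m → φ v = ψ v from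
    H (h - v.1.length) v le_rfl
  intro m
  induction m with
  | zero =>
    intro v hv
    have h2 := v.2
    exact hleaf v (by omega)
  | succ m ih =>
    intro v hv
    by_cases hl : v.1.length < h
    · set c0 := child c h v ⟨0, by omega⟩ hl with hc0
      set c1 := child c h v ⟨1, by omega⟩ hl with hc1
      have hch0 : φ c0 = ψ c0 := ih c0 (by simp [hc0, child]; omega)
      have hch1 : φ c1 = ψ c1 := ih c1 (by simp [hc1, child]; omega)
      have hne : φ c0 ≠ φ c1 := by
        intro hcon
        have h01 : c0 = c1 := hφi hcon
        have h02 := congrArg Subtype.val h01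
        simp [hc0, hc1, child, List.cons.injEq, Fin.ext_iff] at h02
      have hadj0 : treeAdj c h c0 v := Or.inl ⟨_, rfl⟩
      have hadj1 : treeAdj c h c1 v := Or.inl ⟨_, rfl⟩
      have hmemφ : φ v ∈ ({(pr (φ c0) (φ c1) (w c0 v) (w c1 v)).1,
          (pr (φ c0) (φ c1) (w c0 v) (w c1 v)).2} : Set Pt2) := by
        apply pr_spec _ _ hne
        constructor
        · rw [dist_eq_norm, ← norm_neg]; simpa [neg_sub] using hφd c0 v hadj0
        · rw [dist_eq_norm, ← norm_neg]; simpa [neg_sub] using hφd c1 v hadj1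
      have hmemψ : ψ v ∈ ({(pr (φ c0) (φ c1) (w c0 v) (w c1 v)).1,
          (pr (φ c0) (φ c1) (w c0 v) (w c1 v)).2} : Set Pt2) := by
        rw [hch0, hch1]
        apply pr_spec _ _ (hch0 ▸ hch1 ▸ hne)
        constructor
        · rw [dist_eq_norm, ← norm_neg]; simpa [neg_sub] using hψd c0 v hadj0
        · rw [dist_eq_norm, ← norm_neg]; simpa [neg_sub] using hψd c1 v hadj1
      have hbφ : bitOf c h w φ v ↔
          φ v = (pr (φ c0) (φ c1) (w c0 v) (w c1 v)).1 :=
        ⟨fun H => H hl hc, fun H hl' hc' => H⟩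
      have hbψ : bitOf c h w ψ v ↔
          ψ v = (pr (ψ c0) (ψ c1) (w c0 v) (w c1 v)).1 :=
        ⟨fun H => H hl hc, fun H hl' hc' => H⟩
      rw [← hch0, ← hch1] at hbψ
      have hiff : (φ v = (pr (φ c0) (φ c1) (w c0 v) (w c1 v)).1) ↔
          (ψ v = (pr (φ c0) (φ c1) (w c0 v) (w c1 v)).1) := by
        rw [← hbφ, ← hbψ, hbit v]
      by_cases hfirst : φ v = (pr (φ c0) (φ c1) (w c0 v) (w c1 v)).1
      · exact hfirst.trans (hiff.mp hfirst).symm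
      · have hφ2 : φ v = (pr (φ c0) (φ c1) (w c0 v) (w c1 v)).2 :=
          hmemφ.resolve_left hfirst
        have hψ2 : ψ v = (pr (φ c0) (φ c1) (w c0 v) (w c1 v)).2 :=
          hmemψ.resolve_left (fun hcon => hfirst (hiff.mpr hcon))
        exact hφ2.trans hψ2.symm
    · have h2 := v.2
      exact hleaf v (by omega)

abbrev Lf (c h : ℕ) : Type := {l : List (Fin c) // l.length = h}

instance Lf.finite (c h : ℕ) : Finite (Lf c h) := by
  have : Finite {l : List (Fin c) // l.length ≤ h} := TreeVert.finite c h
  exact Finite.of_injective (fun l : Lf c h => (⟨l.1, le_of_eq l.2⟩ : {l : List (Fin c) // l.length ≤ h}))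
    (fun a b hab => Subtype.ext (by simpa [Subtype.ext_iff] using hab))

lemma card_Lf (c h : ℕ) : Nat.card (Lf c h) = c ^ h := by
  have e : Lf c h ≃ (Fin h → Fin c) := Equiv.vectorEquivFin (Fin c) h
  rw [Nat.card_congr e]
  simp [Nat.card_eq_fintype_card]

lemma upper_bound_s7 (c h : ℕ) (hc : 2 ≤ c) (w : TreeVert c h → TreeVert c h → ℝ) :
    ∃ C : ℝ, 0 < C ∧ ∀ (n : ℕ) (E : Finset Pt2), E.card = n →
      ((distTreeConfigs c h w E).ncard : ℝ) ≤ C * (n : ℝ) ^ (c ^ h) := by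
  set K := Nat.card (TreeVert c h) with hK
  refine ⟨(2 : ℝ) ^ K, by positivity, ?_⟩
  intro n E hE
  set S := distTreeConfigs c h w E with hS
  have key : Nat.card S ≤ n ^ (c ^ h) * 2 ^ K := by
    have hinj : Function.Injective
        (fun φ : S => ((fun l : Lf c h => (⟨φ.1 ⟨l.1, le_of_eq l.2⟩, φ.2.1 _⟩ : {x // x ∈ E})),
          (fun v : TreeVert c h => bitOf c h w φ.1 v))) := by
      intro φ ψ hfp
      rw [Prod.ext_iff] at hfp
      obtain ⟨h1, h2⟩ := hfp
      apply Subtype.ext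
      apply config_ext c h hc w φ.1 ψ.1 φ.2.2.1 φ.2.2.2 ψ.2.2.2
      · intro v hv
        have := congrFun h1 ⟨v.1, hv⟩
        exact congrArg Subtype.val this
      · intro v
        exact congrFun h2 v
    calc Nat.card S ≤ Nat.card ((Lf c h → {x // x ∈ E}) × (TreeVert c h → Prop)) :=
          Nat.card_le_card_of_injective _ hinj
      _ = n ^ (c ^ h) * 2 ^ K := by
          rw [Nat.card_prod, Nat.card_fun, Nat.card_fun, card_Lf]
          congr 1
          · congr 1
            rw [Nat.card_eq_fintype_card, Fintype.card_coe, hE]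
          · rw [Nat.card_eq_fintype_card, Fintype.card_prop]
  have hn : (S.ncard : ℝ) ≤ (n : ℝ) ^ (c ^ h) * 2 ^ K := by
    rw [← Nat.card_coe_set_eq]
    calc (Nat.card S : ℝ) ≤ ((n ^ (c ^ h) * 2 ^ K : ℕ) : ℝ) := by exact_mod_cast key
      _ = (n : ℝ) ^ (c ^ h) * 2 ^ K := by push_cast; ring
  linarith [hn]

lemma sphere_infinite (p : Pt2) (r : ℝ) (hr : 0 < r) : {x : Pt2 | dist x p = r}.Infinite := by
  set f : ℝ → Pt2 := fun t => p + (WithLp.equiv 2 (Fin 2 → ℝ)).symm ![t, Real.sqrt (r^2 - t^2)]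
    with hf
  have hmaps : ∀ t ∈ Set.Icc (0:ℝ) r, f t ∈ {x : Pt2 | dist x p = r} := by
    intro t ht
    have ht2 : t^2 ≤ r^2 := by nlinarith [ht.1, ht.2]
    have : dist (f t) p = r := by
      rw [dist_eq_norm, hf]
      simp only [add_sub_cancel_left]
      rw [EuclideanSpace.norm_eq]
      rw [Fin.sum_univ_two]
      simp only [WithLp.equiv_symm_apply, WithLp.ofLp_toLp, Matrix.cons_val_zero, Matrix.cons_val_one,
        Matrix.head_cons, Real.norm_eq_abs, sq_abs]
      rw [Real.sq_sqrt (by linarith)]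
      rw [show t^2 + (r^2 - t^2) = r^2 by ring]
      exact Real.sqrt_sq hr.le
    exact this
  have hinj : Set.InjOn f (Set.Icc 0 r) := by
    intro a _ b _ hab
    have h1 : (WithLp.equiv 2 (Fin 2 → ℝ)).symm ![a, Real.sqrt (r^2 - a^2)]
        = (WithLp.equiv 2 (Fin 2 → ℝ)).symm ![b, Real.sqrt (r^2 - b^2)] := by
      have := hab
      simpa [hf, add_right_inj] using this
    have h2 := congrArg (fun (x : Pt2) => x 0) h1
    simpa using h2
  have hIcc : (Set.Icc (0:ℝ) r).Infinite := Set.Icc_infinite hr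
  exact ((hIcc.image hinj).mono (Set.image_subset_iff.mpr hmaps))

lemma exists_sphere_avoid (p : Pt2) (r : ℝ) (hr : 0 < r) (B : Finset Pt2) :
    ∃ x : Pt2, dist x p = r ∧ x ∉ B := by
  obtain ⟨x, hx⟩ := ((sphere_infinite p r hr).diff B.finite_toSet).nonempty
  exact ⟨x, hx.1, fun hc => hx.2 (by simpa using hc)⟩

lemma circle_points (p : Pt2) (r : ℝ) (hr : 0 < r) (m : ℕ) (B : Finset Pt2) :
    ∃ Q : Finset Pt2, Q.card = m ∧ (∀ x ∈ Q, dist x p = r) ∧ Disjoint Q B := by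
  classical
  induction m with
  | zero => exact ⟨∅, rfl, by simp, by simp⟩
  | succ m ih =>
    obtain ⟨Q, hQc, hQd, hQB⟩ := ih
    obtain ⟨x, hx, hxB⟩ := exists_sphere_avoid p r hr (B ∪ Q)
    refine ⟨insert x Q, ?_, ?_, ?_⟩
    · rw [Finset.card_insert_of_notMem (fun hc => hxB (Finset.mem_union_right _ hc)), hQc]
    · intro y hy
      rcases Finset.mem_insert.mp hy with rfl | hy
      · exact hx
      · exact hQd y hy
    · rw [Finset.disjoint_left]
      intro y hy hyB
      rcases Finset.mem_insert.mp hy with rfl | hy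
      · exact hxB (Finset.mem_union_left _ hyB)
      · exact (Finset.disjoint_left.mp hQB) hy hyB


lemma base_embed (c : ℕ) (ρ : List (Fin c) → Fin c → ℝ) (hρ : ∀ l i, 0 < ρ l i)
    (S : Finset (List (Fin c))) (hcl : ∀ l ∈ S, l ≠ [] → l.tail ∈ S) :
    ∃ ψ : List (Fin c) → Pt2, Set.InjOn ψ ↑S ∧
      ∀ l ∈ S, ∀ i : Fin c, (i :: l) ∈ S → dist (ψ (i :: l)) (ψ l) = ρ l i := by
  classical
  induction S using Finset.strongInduction with
  | _ S ih =>
    rcases Finset.eq_empty_or_nonempty S with rfl | hne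
    · exact ⟨fun _ => 0, by simp, by simp⟩
    · obtain ⟨l₀, hl₀S, hmax⟩ := S.exists_max_image (fun l => l.length) hne
      rcases l₀ with _ | ⟨j, t⟩
      · -- S contains only the empty list
        have hsub : S = {[]} := by
          apply Finset.eq_singleton_iff_unique_mem.mpr
          refine ⟨hl₀S, fun l hl => ?_⟩
          have := hmax l hl
          simpa [List.length_eq_zero_iff] using this
        subst hsub
        refine ⟨fun _ => 0, by simp, ?_⟩
        intro l hl i hil
        have hnil : i :: l = [] := by simpa using hil
        simp at hnil
      · -- remove l₀ = j :: t
        set S' := S.erase (j :: t) with hS'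
        have hss : S' ⊂ S := Finset.erase_ssubset hl₀S
        have hcl' : ∀ l ∈ S', l ≠ [] → l.tail ∈ S' := by
          intro l hl hlne
          have hlS : l ∈ S := Finset.mem_of_mem_erase hl
          have htS : l.tail ∈ S := hcl l hlS hlne
          refine Finset.mem_erase.mpr ⟨?_, htS⟩
          intro hcon
          have h1 : l.tail.length < l.length := by
            cases l with
            | nil => exact absurd rfl hlne
            | cons a l' => simp
          have h2 := hmax l hlS
          rw [hcon] at h1
          omega
        obtain ⟨ψ, hinj, hdist⟩ := ih S' hss hcl'
        have htS : t ∈ S := by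
          have := hcl (j :: t) hl₀S (by simp)
          simpa using this
        have htS' : t ∈ S' := by
          refine Finset.mem_erase.mpr ⟨?_, htS⟩
          intro hcon
          have := congrArg List.length hcon
          simp at this
        obtain ⟨x, hxd, hxB⟩ := exists_sphere_avoid (ψ t) (ρ t j) (hρ t j) (S'.image ψ)
        set ψ' := Function.update ψ (j :: t) x with hψ'
        have hne' : ∀ l ∈ S', ψ' l = ψ l := by
          intro l hl
          apply Function.update_of_ne (Finset.ne_of_mem_erase hl)
        refine ⟨ψ', ?_, ?_⟩
        · intro a ha b hb hab
          by_cases haj : a = j :: t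
          · by_cases hbj : b = j :: t
            · rw [haj, hbj]
            · exfalso
              have hbS' : b ∈ S' := Finset.mem_erase.mpr ⟨hbj, hb⟩
              rw [haj, hψ'] at hab
              rw [Function.update_self, Function.update_of_ne hbj] at hab
              exact hxB (Finset.mem_image.mpr ⟨b, hbS', hab.symm⟩)
          · by_cases hbj : b = j :: t
            · exfalso
              have haS' : a ∈ S' := Finset.mem_erase.mpr ⟨haj, ha⟩
              rw [hbj, hψ'] at hab
              rw [Function.update_self, Function.update_of_ne haj] at hab
              exact hxB (Finset.mem_image.mpr ⟨a, haS', hab⟩)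
            · have haS' : a ∈ S' := Finset.mem_erase.mpr ⟨haj, ha⟩
              have hbS' : b ∈ S' := Finset.mem_erase.mpr ⟨hbj, hb⟩
              rw [hne' a haS', hne' b hbS'] at hab
              exact hinj haS' hbS' hab
        · intro l hl i hil
          by_cases hilj : (i :: l) = j :: t
          · have hi : i = j := by injection hilj
            have hlt : l = t := by injection hilj
            rw [hψ', hilj, Function.update_self, hlt, hi]
            have htne : t ≠ j :: t := fun hcon => by simpa using congrArg List.length hcon
            rw [Function.update_of_ne htne]
            exact hxd
          · have hilS' : (i :: l) ∈ S' := Finset.mem_erase.mpr ⟨hilj, hil⟩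
            have hlj : l ≠ j :: t := by
              intro hcon
              have := hmax (i :: l) hil
              rw [hcon] at this
              simp at this
            have hlS' : l ∈ S' := Finset.mem_erase.mpr ⟨hlj, hl⟩
            rw [hne' _ hilS', hne' _ hlS']
            exact hdist l hlS' i hilS'

lemma circle_family {α : Type} [DecidableEq α] (m : ℕ) (ctr : α → Pt2) (rad : α → ℝ)
    (hrad : ∀ a, 0 < rad a) (B : Finset Pt2) (T : Finset α) :
    ∃ P : α → Finset Pt2,
      (∀ a ∈ T, (P a).card = m) ∧
      (∀ a ∈ T, ∀ x ∈ P a, dist x (ctr a) = rad a) ∧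
      (∀ a ∈ T, Disjoint (P a) B) ∧
      (∀ a ∈ T, ∀ b ∈ T, a ≠ b → Disjoint (P a) (P b)) := by
  classical
  induction T using Finset.induction with
  | empty => exact ⟨fun _ => ∅, by simp, by simp, by simp, by simp⟩
  | @insert a T haT ih =>
    obtain ⟨P, h1, h2, h3, h4⟩ := ih
    obtain ⟨Q, hQc, hQd, hQdis⟩ :=
      circle_points (ctr a) (rad a) (hrad a) m (B ∪ T.biUnion P)
    set P' := Function.update P a Q with hP'
    have hPa : P' a = Q := Function.update_self _ _ _
    have hPb : ∀ b ∈ T, P' b = P b := by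
      intro b hb
      exact Function.update_of_ne (by rintro rfl; exact haT hb) _ _
    refine ⟨P', ?_, ?_, ?_, ?_⟩
    · intro b hb
      rcases Finset.mem_insert.mp hb with rfl | hb
      · rw [hPa, hQc]
      · rw [hPb b hb]; exact h1 b hb
    · intro b hb
      rcases Finset.mem_insert.mp hb with rfl | hb
      · rw [hPa]; exact hQd
      · rw [hPb b hb]; exact h2 b hb
    · intro b hb
      rcases Finset.mem_insert.mp hb with rfl | hb
      · rw [hPa]; exact hQdis.mono_right Finset.subset_union_left
      · rw [hPb b hb]; exact h3 b hb
    · have key : ∀ b ∈ T, Disjoint (P' a) (P' b) := by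
        intro b hb
        rw [hPa, hPb b hb]
        exact hQdis.mono_right
          (le_trans (Finset.subset_biUnion_of_mem P hb) Finset.subset_union_right)
      intro b hb b' hb' hbb'
      rcases Finset.mem_insert.mp hb with hba | hb
      · rcases Finset.mem_insert.mp hb' with hba' | hb'
        · exact absurd (hba.trans hba'.symm) hbb'
        · rw [hba]; exact key b' hb'
      · rcases Finset.mem_insert.mp hb' with hba' | hb'
        · rw [hba']; exact (key b hb).symm
        · rw [hPb b hb, hPb b' hb']
          exact h4 b hb b' hb' hbb'

lemma configs_finite_s7 (c h : ℕ) (w : TreeVert c h → TreeVert c h → ℝ) (E : Finset Pt2) :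
    (distTreeConfigs c h w E).Finite := by
  apply Set.Finite.subset (Set.Finite.pi (fun _ : TreeVert c h => E.finite_toSet))
  intro φ hφ
  rw [Set.mem_pi]
  exact fun v _ => hφ.1 v

instance inst_s7 : Infinite Pt2 :=
  Infinite.of_injective (fun t : ℝ => (WithLp.equiv 2 (Fin 2 → ℝ)).symm ![t, 0])
    (by
      intro a b hab
      have := congrArg (fun x : Pt2 => x 0) hab
      simpa using this)

lemma lower_bound_s7 (c h : ℕ) (hc : 2 ≤ c) (hh : 1 ≤ h)
    (w : TreeVert c h → TreeVert c h → ℝ)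
    (hsym : ∀ u v, w u v = w v u)
    (hpos : ∀ u v, treeAdj c h u v → 0 < w u v) :
    ∃ c' : ℝ, 0 < c' ∧ ∃ N : ℕ, ∀ n : ℕ, N < n →
      ∃ E : Finset Pt2, E.card = n ∧
        c' * (n : ℝ) ^ (c ^ h) ≤ ((distTreeConfigs c h w E).ncard : ℝ) := by
  classical
  -- radius function
  set ρ : List (Fin c) → Fin c → ℝ := fun l i =>
    if hl : l.length + 1 ≤ h then w ⟨i :: l, hl⟩ ⟨l, by omega⟩ else 1 with hρdef
  have hρ : ∀ l i, 0 < ρ l i := by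
    intro l i
    rw [hρdef]
    dsimp only
    split_ifs with hl
    · exact hpos _ _ (Or.inl ⟨i, rfl⟩)
    · norm_num
  -- internal vertices
  set Sint : Finset (List (Fin c)) :=
    (List.finite_length_le (α := Fin c) (n := h-1)).toFinset with hSint
  have hSmem : ∀ l : List (Fin c), l ∈ Sint ↔ l.length ≤ h - 1 := by
    intro l; rw [hSint, Set.Finite.mem_toFinset]; rfl
  have hclS : ∀ l ∈ Sint, l ≠ [] → l.tail ∈ Sint := by
    intro l hl _
    rw [hSmem] at hl ⊢
    calc l.tail.length ≤ l.length := by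
          cases l with
          | nil => simp
          | cons a l' => simp
      _ ≤ h - 1 := hl
  obtain ⟨ψ, hψinj, hψdist⟩ := base_embed c ρ hρ Sint hclS
  set B : Finset Pt2 := Sint.image ψ with hB
  -- leaf data
  have hlf_ne : ∀ l : Lf c h, l.1 ≠ [] := by
    intro l hcon
    have h2 := l.2
    rw [hcon] at h2
    simp at h2
    omega
  set ctr : Lf c h → Pt2 := fun l => ψ l.1.tail with hctr
  set rad : Lf c h → ℝ := fun l => ρ l.1.tail (l.1.head (hlf_ne l)) with hrad_def
  have hradpos : ∀ l, 0 < rad l := fun l => hρ _ _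
  letI : Fintype (Lf c h) := Fintype.ofFinite _
  set L := c ^ h with hL
  have hLpos : 0 < L := pow_pos (by omega) h
  have hLcard : Fintype.card (Lf c h) = L := by
    rw [← Nat.card_eq_fintype_card, card_Lf]
  set I := Sint.card with hI
  refine ⟨((2 * L : ℝ))⁻¹ ^ L, by positivity, 2 * I + 2 * L + 2, ?_⟩
  intro n hn
  set m := (n - I) / L with hm
  have hm' : L * m + (n - I) % L = n - I := by rw [hm]; exact Nat.div_add_mod _ _
  have hmod : (n - I) % L < L := Nat.mod_lt _ hLpos
  obtain ⟨P, hP1, hP2, hP3, hP4⟩ := circle_family m ctr rad hradpos B Finset.univ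
  set E0 : Finset Pt2 := B ∪ Finset.univ.biUnion P with hE0
  have hE0card : E0.card ≤ n := by
    have h1 : B.card ≤ I := Finset.card_image_le
    have h2 : (Finset.univ.biUnion P).card ≤ L * m := by
      calc (Finset.univ.biUnion P).card ≤ ∑ l, (P l).card := Finset.card_biUnion_le
        _ = ∑ l : Lf c h, m := by
            apply Finset.sum_congr rfl
            intro l _
            exact hP1 l (Finset.mem_univ l)
        _ = L * m := by rw [Finset.sum_const, smul_eq_mul, Finset.card_univ, hLcard]

    calc E0.card ≤ B.card + (Finset.univ.biUnion P).card := Finset.card_union_le _ _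
      _ ≤ I + L * m := by omega
      _ ≤ n := by omega
  obtain ⟨E, hE0E, hEcard⟩ := Infinite.exists_superset_card_eq E0 n hE0card
  refine ⟨E, hEcard, ?_⟩
  -- subsets
  have hsub : ∀ l : Lf c h, (P l : Finset Pt2) ⊆ E := fun l =>
    le_trans (le_trans (Finset.subset_biUnion_of_mem P (Finset.mem_univ l))
      Finset.subset_union_right) hE0E
  have hBsub : B ⊆ E := le_trans Finset.subset_union_left hE0E
  -- the configuration map
  set Θ : (∀ l : Lf c h, {x // x ∈ P l}) → (TreeVert c h → Pt2) := fun s v =>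
    if hv : v.1.length = h then (s ⟨v.1, hv⟩ : Pt2) else ψ v.1 with hΘ
  have hθleaf : ∀ s, ∀ (l : Lf c h) (v : TreeVert c h), v.1 = l.1 → Θ s v = s l := by
    intro s l v hv
    simp only [hΘ]
    rw [dif_pos (by rw [hv]; exact l.2)]
    have : (⟨v.1, by rw [hv]; exact l.2⟩ : Lf c h) = l := Subtype.ext hv
    rw [this]
  have hθint : ∀ s, ∀ v : TreeVert c h, ¬ v.1.length = h → Θ s v = ψ v.1 := by
    intro s v hv
    simp only [hΘ]
    rw [dif_neg hv]
  have hmemB : ∀ v : TreeVert c h, ¬ v.1.length = h → ψ v.1 ∈ B := by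
    intro v hv
    exact Finset.mem_image_of_mem ψ ((hSmem _).mpr (by have := v.2; omega))
  have hmemSint : ∀ v : TreeVert c h, ¬ v.1.length = h → v.1 ∈ Sint := by
    intro v hv
    exact (hSmem _).mpr (by have := v.2; omega)
  have hconf : ∀ s, Θ s ∈ distTreeConfigs c h w E := by
    intro s
    refine ⟨?_, ?_, ?_⟩
    · intro v
      by_cases hv : v.1.length = h
      · rw [hθleaf s ⟨v.1, hv⟩ v rfl]
        exact hsub _ (s ⟨v.1, hv⟩).2
      · rw [hθint s v hv]
        exact hBsub (hmemB v hv)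
    · intro u v huv
      by_cases hu : u.1.length = h <;> by_cases hv : v.1.length = h
      · rw [hθleaf s ⟨u.1, hu⟩ u rfl, hθleaf s ⟨v.1, hv⟩ v rfl] at huv
        by_cases hne : (⟨u.1, hu⟩ : Lf c h) = ⟨v.1, hv⟩
        · exact Subtype.ext (show u.1 = v.1 from congrArg (fun x : Lf c h => x.1) hne)
        · exfalso
          have hdis := hP4 _ (Finset.mem_univ (⟨u.1, hu⟩ : Lf c h)) _
            (Finset.mem_univ (⟨v.1, hv⟩ : Lf c h)) hne
          exact Finset.disjoint_left.mp hdis (s ⟨u.1, hu⟩).2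
            (by rw [huv]; exact (s ⟨v.1, hv⟩).2)
      · exfalso
        rw [hθleaf s ⟨u.1, hu⟩ u rfl, hθint s v hv] at huv
        exact Finset.disjoint_left.mp (hP3 _ (Finset.mem_univ (⟨u.1, hu⟩ : Lf c h)))
          (s ⟨u.1, hu⟩).2 (by rw [huv]; exact hmemB v hv)
      · exfalso
        rw [hθint s u hu, hθleaf s ⟨v.1, hv⟩ v rfl] at huv
        exact Finset.disjoint_left.mp (hP3 _ (Finset.mem_univ (⟨v.1, hv⟩ : Lf c h)))
          (s ⟨v.1, hv⟩).2 (by rw [← huv]; exact hmemB u hu)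
      · rw [hθint s u hu, hθint s v hv] at huv
        exact Subtype.ext (hψinj (Finset.mem_coe.mpr (hmemSint u hu))
          (Finset.mem_coe.mpr (hmemSint v hv)) huv)
    · have main : ∀ (u v : TreeVert c h) (i : Fin c), u.1 = i :: v.1 →
          ‖Θ s u - Θ s v‖ = w u v := by
        intro u v i hui
        obtain ⟨ul, hulen⟩ := u
        simp only at hui
        subst hui
        have hlv := v.2
        have hlen : v.1.length + 1 ≤ h := by simpa using hulen
        have hweq : ρ v.1 i = w ⟨i :: v.1, hulen⟩ v := by
          simp only [hρdef]
          rw [dif_pos hlen]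
          exact congrArg₂ w (Subtype.ext rfl) (Subtype.ext rfl)
        have hvne : ¬ v.1.length = h := by omega
        rw [hθint s v hvne]
        by_cases hu : (i :: v.1).length = h
        · rw [hθleaf s ⟨i :: v.1, hu⟩ ⟨i :: v.1, hulen⟩ rfl]
          have hd := hP2 _ (Finset.mem_univ (⟨i :: v.1, hu⟩ : Lf c h)) _
            (s ⟨i :: v.1, hu⟩).2
          have hctr' : ctr ⟨i :: v.1, hu⟩ = ψ v.1 := by
            simp only [hctr, List.tail_cons]
          have hrad' : rad ⟨i :: v.1, hu⟩ = w ⟨i :: v.1, hulen⟩ v := by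
            simp only [hrad_def]
            rw [← hweq]
            simp only [List.tail_cons, List.head_cons]
          rw [← dist_eq_norm, ← hctr', ← hrad']
          exact hd
        · rw [hθint s ⟨i :: v.1, hulen⟩ hu]
          have h1 : (i :: v.1) ∈ Sint := (hSmem _).mpr (by simp at hu ⊢; omega)
          have h2 : v.1 ∈ Sint := (hSmem _).mpr (by have := v.2; simp at hu; omega)
          have hd := hψdist v.1 h2 i h1
          rw [← dist_eq_norm, hd]
          exact hweq ▸ rfl
      intro u v huv
      rcases huv with ⟨i, hui⟩ | ⟨i, hvi⟩
      · exact main u v i hui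
      · rw [norm_sub_rev, hsym u v]
        exact main v u i hvi
  haveI hfin : Finite ↥(distTreeConfigs c h w E) := (configs_finite_s7 c h w E).to_subtype
  have hinj : Function.Injective (fun s : (∀ l : Lf c h, {x // x ∈ P l}) =>
      (⟨Θ s, hconf s⟩ : ↥(distTreeConfigs c h w E))) := by
    intro s s' hss
    have h1 : Θ s = Θ s' := congrArg Subtype.val hss
    funext l
    apply Subtype.ext
    have h2 := congrFun h1 ⟨l.1, le_of_eq l.2⟩
    rw [hθleaf s l ⟨l.1, le_of_eq l.2⟩ rfl, hθleaf s' l ⟨l.1, le_of_eq l.2⟩ rfl] at h2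
    exact h2
  have hcard1 : m ^ L ≤ Nat.card ↥(distTreeConfigs c h w E) := by
    have hle := Nat.card_le_card_of_injective _ hinj
    rw [Nat.card_pi] at hle
    calc m ^ L = ∏ _l : Lf c h, m := by
          rw [Finset.prod_const, Finset.card_univ, hLcard]
      _ = ∏ l : Lf c h, Nat.card {x // x ∈ P l} := by
          apply Finset.prod_congr rfl
          intro l _
          rw [Nat.card_eq_fintype_card, Fintype.card_coe, hP1 l (Finset.mem_univ l)]
      _ ≤ _ := hle
  have h2Lm : n ≤ 2 * (L * m) := by omega
  have hLR : (0:ℝ) < 2 * L := by positivity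
  have hfinal : ((2 * (L:ℝ)))⁻¹ ^ L * (n:ℝ) ^ L ≤ (m : ℝ) ^ L := by
    rw [← mul_pow]
    apply pow_le_pow_left₀ (by positivity)
    rw [inv_mul_le_iff₀ hLR]
    have hcast := (Nat.cast_le (α := ℝ)).mpr h2Lm
    push_cast at hcast
    linarith
  calc ((2 * (L:ℝ)))⁻¹ ^ L * (n:ℝ) ^ (c ^ h) = ((2 * (L:ℝ)))⁻¹ ^ L * (n:ℝ) ^ L := by
        rw [← hL]
    _ ≤ (m : ℝ) ^ L := hfinal
    _ ≤ ((distTreeConfigs c h w E).ncard : ℝ) := by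
        rw [← Nat.card_coe_set_eq]
        calc ((m:ℝ)) ^ L = ((m ^ L : ℕ) : ℝ) := by push_cast; ring
          _ ≤ _ := by exact_mod_cast hcard1

/-- **distance configurations on perfect `c`-ary trees, in the plane.**
Fix `c ≥ 2`, `h ≥ 1`, and any assignment `w` of positive weights to the edges of
`T_{c,h}`.  Then `f(T_{c,h}; n) ≈ n^(c^h)`: there is `C > 0` such that every set of `n`
points in the plane has at most `C · n^(c^h)` distance `T_{c,h}`-configurations, and
there are `c' > 0` and `N` such that for every `n > N` some set of `n` points in the
plane has at least `c' · n^(c^h)` of them. -/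
theorem distance_tree_bounds (c h : ℕ) (hc : 2 ≤ c) (hh : 1 ≤ h)
    (w : TreeVert c h → TreeVert c h → ℝ)
    (hsym : ∀ u v, w u v = w v u)
    (hpos : ∀ u v, treeAdj c h u v → 0 < w u v) :
    (∃ C : ℝ, 0 < C ∧ ∀ (n : ℕ) (E : Finset Pt2), E.card = n →
      ((distTreeConfigs c h w E).ncard : ℝ) ≤ C * (n : ℝ) ^ (c ^ h)) ∧
    (∃ c' : ℝ, 0 < c' ∧ ∃ N : ℕ, ∀ n : ℕ, N < n →
      ∃ E : Finset Pt2, E.card = n ∧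
        c' * (n : ℝ) ^ (c ^ h) ≤ ((distTreeConfigs c h w E).ncard : ℝ)) := by
  exact ⟨upper_bound_s7 c h hc w, lower_bound_s7 c h hc hh w hsym hpos⟩
end
end

section
/- Fix integers c ≥ 3 and h ≥ 1 and a positive real number α, and let T_{c,h,α} be the perfect c-ary tree of height h with every edge weight equal to α. Then f₃(T_{c,h,α}; n) ≈ n^(c^h): there is a constant C > 0 such that every set of n points in ℝ³ contains at most C · n^(c^h) distance T_{c,h,α}-configurations, and there exist a constant c' > 0 and N such that for every n > N some set of n points in ℝ³ contains at least c' · n^(c^h) distance T_{c,h,α}-configurations. -/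
open scoped InnerProductSpace

noncomputable section

/-- Points in three-dimensional space. -/
abbrev Pt3 : Type := EuclideanSpace ℝ (Fin 3)

/-- The set of distance `T_{c,h,α}`-configurations in a point set `E ⊆ ℝ³`, where every
edge of `T_{c,h}` carries the same weight `α`: injective maps `φ` from the vertices of
`T_{c,h}` into `E` such that the distance between the images of any two adjacent vertices
equals `α`. -/
def distTreeConfigs3 (c h : ℕ) (α : ℝ) (E : Finset Pt3) : Set (TreeVert c h → Pt3) :=
  {φ | (∀ v, φ v ∈ E) ∧ Function.Injective φ ∧
    ∀ u v, treeAdj c h u v → ‖φ u - φ v‖ = α}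

-- ### auxiliary vertex types
abbrev LeafV (c h : ℕ) : Type := {l : List (Fin c) // l.length = h}
abbrev IntV (c h : ℕ) : Type := {l : List (Fin c) // l.length < h}

instance (c h : ℕ) : Finite (TreeVert c h) := (List.finite_length_le (Fin c) h).to_subtype
instance (c h : ℕ) : Finite (LeafV c h) := (List.finite_length_eq (Fin c) h).to_subtype
instance (c h : ℕ) : Finite (IntV c h) := (List.finite_length_lt (Fin c) h).to_subtype

lemma card_leafV (c h : ℕ) : Nat.card (LeafV c h) = c ^ h := by
  have : Nat.card (List.Vector (Fin c) h) = c ^ h := by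
    rw [Nat.card_eq_fintype_card, card_vector, Fintype.card_fin]
  exact this

def childV {c h : ℕ} (i : Fin c) (v : IntV c h) : TreeVert c h :=
  ⟨i :: v.1, by have := v.2; simp only [List.length_cons]; omega⟩

def vertOfInt {c h : ℕ} (v : IntV c h) : TreeVert c h := ⟨v.1, v.2.le⟩
def vertOfLeaf {c h : ℕ} (l : LeafV c h) : TreeVert c h := ⟨l.1, l.2.le⟩

open Classical in
def canonPt (S : Set Pt3) : Pt3 := if hS : S.Nonempty then hS.some else 0

lemma canonPt_mem {S : Set Pt3} (hS : S.Nonempty) : canonPt S ∈ S := by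
  classical
  rw [canonPt]
  rw [dif_pos hS]
  exact hS.some_mem

def Sv {c h : ℕ} (hc : 3 ≤ c) (α : ℝ) (φ : TreeVert c h → Pt3) (v : IntV c h) : Set Pt3 :=
  {x | ‖x - φ (childV ⟨0, by omega⟩ v)‖ = α ∧ ‖x - φ (childV ⟨1, by omega⟩ v)‖ = α ∧
    ‖x - φ (childV ⟨2, by omega⟩ v)‖ = α}

def bitP {c h : ℕ} (hc : 3 ≤ c) (α : ℝ) (φ : TreeVert c h → Pt3) (v : IntV c h) : Prop :=
  φ (vertOfInt v) = canonPt (Sv hc α φ v)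


lemma key_inner {v w : Pt3} (h : ‖v - w‖ = ‖v‖) : 2 * ⟪v, w⟫_ℝ = ‖w‖ ^ 2 := by
  have h2 : ‖v - w‖ ^ 2 = ‖v‖ ^ 2 := by rw [h]
  rw [norm_sub_sq_real] at h2
  linarith

/-- At most two points at given distance from three distinct points in `ℝ³`. -/
lemma sphere3 {a b c x y z : Pt3} {α : ℝ}
    (hab : a ≠ b) (hac : a ≠ c) (hbc : b ≠ c)
    (hxa : ‖x - a‖ = α) (hxb : ‖x - b‖ = α) (hxc : ‖x - c‖ = α)
    (hya : ‖y - a‖ = α) (hyb : ‖y - b‖ = α) (hyc : ‖y - c‖ = α)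
    (hza : ‖z - a‖ = α) (hzb : ‖z - b‖ = α) (hzc : ‖z - c‖ = α) :
    x = y ∨ x = z ∨ y = z := by
  set n₁ : Pt3 := b - a with hn₁
  set n₂ : Pt3 := c - a with hn₂
  have hn₁0 : n₁ ≠ 0 := sub_ne_zero.mpr (Ne.symm hab)
  have hn₂0 : n₂ ≠ 0 := sub_ne_zero.mpr (Ne.symm hac)
  have e1 : ∀ w : Pt3, ‖w - a‖ = α → ‖w - b‖ = α → 2 * ⟪w - a, n₁⟫_ℝ = ‖n₁‖ ^ 2 := by
    intro w h1 h2
    apply key_inner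
    have h3 : w - a - n₁ = w - b := by rw [hn₁]; abel
    rw [h3, h1, h2]
  have e2 : ∀ w : Pt3, ‖w - a‖ = α → ‖w - c‖ = α → 2 * ⟪w - a, n₂⟫_ℝ = ‖n₂‖ ^ 2 := by
    intro w h1 h2
    apply key_inner
    have h3 : w - a - n₂ = w - c := by rw [hn₂]; abel
    rw [h3, h1, h2]
  by_cases hdep : ∃ s : ℝ, n₁ = s • n₂
  · -- collinear centers: no solution at all, contradiction with x
    obtain ⟨s, hs⟩ := hdep
    exfalso
    have h1 := e1 x hxa hxb
    have h2 := e2 x hxa hxc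
    rw [hs, real_inner_smul_right, norm_smul] at h1
    have hn : ‖n₂‖ ≠ 0 := norm_ne_zero_iff.mpr hn₂0
    have hN : (0:ℝ) < ‖n₂‖ ^ 2 := pow_pos (norm_pos_iff.mpr hn₂0) 2
    have h1' : 2 * (s * ⟪x - a, n₂⟫_ℝ) = s ^ 2 * ‖n₂‖ ^ 2 := by
      rw [h1, mul_pow]
      simp [Real.norm_eq_abs, sq_abs]
    have hz0 : (s ^ 2 - s) * ‖n₂‖ ^ 2 = 0 := by linear_combination s * h2 - h1'
    have hss : s = 0 ∨ s = 1 := by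
      rcases mul_eq_zero.mp hz0 with h | h
      · have h' : s * (s - 1) = 0 := by linear_combination h
        rcases mul_eq_zero.mp h' with h'' | h''
        · exact Or.inl h''
        · exact Or.inr (by linarith)
      · exact absurd h (ne_of_gt hN)
    rcases hss with h | h
    · rw [h, zero_smul] at hs; exact hn₁0 hs
    · rw [h, one_smul] at hs
      rw [hn₁, hn₂] at hs
      exact hbc (sub_left_inj.mp hs)
  · -- independent case
    have hli : LinearIndependent ℝ ![n₁, n₂] := by
      rw [linearIndependent_fin2]
      refine ⟨by simpa using hn₂0, fun s hs => hdep ⟨s, ?_⟩⟩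
      simpa using hs.symm
    set K : Submodule ℝ Pt3 := Submodule.span ℝ {n₁, n₂} with hK
    have hKrank : Module.finrank ℝ K = 2 := by
      have h2 := finrank_span_eq_card hli
      rw [show Set.range ![n₁, n₂] = {n₁, n₂} by
        rw [Matrix.range_cons, Matrix.range_cons_empty, Set.singleton_union]] at h2
      rw [hK, h2]
      simp
    have hWrank : Module.finrank ℝ Kᗮ = 1 := by
      have h3 := K.finrank_add_finrank_orthogonal
      rw [hKrank, finrank_euclideanSpace_fin] at h3
      omega
    have hmem : ∀ w : Pt3, ‖w - a‖ = α → ‖w - b‖ = α → ‖w - c‖ = α →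
        ∀ w' : Pt3, ‖w' - a‖ = α → ‖w' - b‖ = α → ‖w' - c‖ = α →
        w - w' ∈ Kᗮ := by
      intro w h1 h2 h3 w' h1' h2' h3'
      rw [Submodule.mem_orthogonal]
      intro u hu
      rw [hK, Submodule.mem_span_pair] at hu
      obtain ⟨p, q, rfl⟩ := hu
      have i1 : ⟪w - a, n₁⟫_ℝ = ⟪w' - a, n₁⟫_ℝ := by
        have := e1 w h1 h2; have := e1 w' h1' h2'; linarith
      have i2 : ⟪w - a, n₂⟫_ℝ = ⟪w' - a, n₂⟫_ℝ := by
        have := e2 w h1 h3; have := e2 w' h1' h3'; linarith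
      have j1 : ⟪n₁, w - w'⟫_ℝ = 0 := by
        rw [real_inner_comm, show w - w' = (w - a) - (w' - a) by abel, inner_sub_left]
        rw [i1]; ring
      have j2 : ⟪n₂, w - w'⟫_ℝ = 0 := by
        rw [real_inner_comm, show w - w' = (w - a) - (w' - a) by abel, inner_sub_left]
        rw [i2]; ring
      rw [inner_add_left, real_inner_smul_left, real_inner_smul_left, j1, j2]
      ring
    by_cases hxy : x = y
    · exact Or.inl hxy
    have hu0 : x - y ≠ 0 := sub_ne_zero.mpr hxy
    have humem : x - y ∈ Kᗮ := hmem x hxa hxb hxc y hya hyb hyc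
    have hwmem : x - z ∈ Kᗮ := hmem x hxa hxb hxc z hza hzb hzc
    obtain ⟨v, hv⟩ := finrank_le_one_iff.mp (le_of_eq hWrank)
    obtain ⟨p, hp⟩ := hv ⟨x - y, humem⟩
    obtain ⟨q, hq⟩ := hv ⟨x - z, hwmem⟩
    have hp' : p • (v : Pt3) = x - y := by rw [← Submodule.coe_smul, hp]
    have hq' : q • (v : Pt3) = x - z := by rw [← Submodule.coe_smul, hq]
    have hp0 : p ≠ 0 := by
      intro h; rw [h, zero_smul] at hp'; exact hu0 hp'.symm
    have hr : x - z = (q / p) • (x - y) := by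
      rw [← hp', ← hq', smul_smul]
      congr 1
      field_simp
    set r : ℝ := q / p with hrdef
    have f1 : 2 * ⟪x - a, x - y⟫_ℝ = ‖x - y‖ ^ 2 := by
      apply key_inner
      have h4 : x - a - (x - y) = y - a := by abel
      rw [h4, hya, hxa]
    have f2 : 2 * ⟪x - a, x - z⟫_ℝ = ‖x - z‖ ^ 2 := by
      apply key_inner
      have h4 : x - a - (x - z) = z - a := by abel
      rw [h4, hza, hxa]
    rw [hr, real_inner_smul_right, norm_smul, mul_pow, Real.norm_eq_abs, sq_abs] at f2
    have hN : (0:ℝ) < ‖x - y‖ ^ 2 := pow_pos (norm_pos_iff.mpr hu0) 2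
    have hz0 : (r ^ 2 - r) * ‖x - y‖ ^ 2 = 0 := by linear_combination r * f1 - f2
    have hrr : r = 0 ∨ r = 1 := by
      rcases mul_eq_zero.mp hz0 with h | h
      · have h' : r * (r - 1) = 0 := by linear_combination h
        rcases mul_eq_zero.mp h' with h'' | h''
        · exact Or.inl h''
        · exact Or.inr (by linarith)
      · exact absurd h (ne_of_gt hN)
    rcases hrr with h | h
    · right; left
      rw [h, zero_smul] at hr
      exact sub_eq_zero.mp hr
    · right; right
      rw [h, one_smul] at hr
      exact (sub_right_inj.mp hr).symm

lemma childV_ne {c h : ℕ} {i j : Fin c} (hij : i ≠ j) (v : IntV c h) :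
    childV i v ≠ childV j v := by
  intro hcontra
  have := congrArg (fun w : TreeVert c h => w.1) hcontra
  simp only [childV, List.cons.injEq] at this
  exact hij this.1

lemma mem_Sv_self {c h : ℕ} (hc : 3 ≤ c) {α : ℝ} {E : Finset Pt3}
    {φ : TreeVert c h → Pt3} (hφ : φ ∈ distTreeConfigs3 c h α E) (v : IntV c h) :
    φ (vertOfInt v) ∈ Sv hc α φ v := by
  obtain ⟨-, -, hdist⟩ := hφ
  have key : ∀ i : Fin c, ‖φ (vertOfInt v) - φ (childV i v)‖ = α := by
    intro i
    rw [norm_sub_rev]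
    exact hdist _ _ (Or.inl ⟨i, rfl⟩)
  exact ⟨key _, key _, key _⟩

/-- Reconstruction: a configuration is determined by its leaf values and its bits. -/
lemma recon {c h : ℕ} (hc : 3 ≤ c) {α : ℝ} (hα : 0 < α) {E : Finset Pt3}
    {φ ψ : TreeVert c h → Pt3}
    (hφ : φ ∈ distTreeConfigs3 c h α E) (hψ : ψ ∈ distTreeConfigs3 c h α E)
    (hleaf : ∀ l : LeafV c h, φ (vertOfLeaf l) = ψ (vertOfLeaf l))
    (hbit : ∀ v : IntV c h, bitP hc α φ v = bitP hc α ψ v) :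
    φ = ψ := by
  have main : ∀ k : ℕ, ∀ (l : List (Fin c)) (hl : l.length ≤ h), h - l.length ≤ k →
      φ ⟨l, hl⟩ = ψ ⟨l, hl⟩ := by
    intro k
    induction k with
    | zero =>
      intro l hl hk
      have hlen : l.length = h := by omega
      exact hleaf ⟨l, hlen⟩
    | succ k ih =>
      intro l hl hk
      by_cases hlen : l.length = h
      · exact hleaf ⟨l, hlen⟩
      · have hlt : l.length < h := lt_of_le_of_ne hl hlen
        set v : IntV c h := ⟨l, hlt⟩ with hv
        have hch : ∀ i : Fin c, φ (childV i v) = ψ (childV i v) := by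
          intro i
          have : (childV i v).1.length ≤ h := (childV i v).2
          have heq : φ ⟨(childV i v).1, (childV i v).2⟩ = ψ ⟨(childV i v).1, (childV i v).2⟩ := by
            apply ih
            simp only [childV, List.length_cons]
            have hvl : (v : List (Fin c)).length = l.length := rfl
            omega
          exact heq
        have hS : Sv hc α φ v = Sv hc α ψ v := by
          unfold Sv
          rw [hch ⟨0, by omega⟩, hch ⟨1, by omega⟩, hch ⟨2, by omega⟩]
        have hφmem : φ (vertOfInt v) ∈ Sv hc α φ v := mem_Sv_self hc hφ v
        have hψmem : ψ (vertOfInt v) ∈ Sv hc α φ v := by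
          rw [hS]; exact mem_Sv_self hc hψ v
        have hne : (Sv hc α φ v).Nonempty := ⟨_, hφmem⟩
        have hcmem : canonPt (Sv hc α φ v) ∈ Sv hc α φ v := canonPt_mem hne
        -- the three children images are pairwise distinct
        have hinj := hφ.2.1
        have d01 : φ (childV (⟨0, by omega⟩ : Fin c) v) ≠ φ (childV ⟨1, by omega⟩ v) :=
          fun hcon => childV_ne (by simp [Fin.ext_iff]) v (hinj hcon)
        have d02 : φ (childV (⟨0, by omega⟩ : Fin c) v) ≠ φ (childV ⟨2, by omega⟩ v) :=
          fun hcon => childV_ne (by simp [Fin.ext_iff]) v (hinj hcon)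
        have d12 : φ (childV (⟨1, by omega⟩ : Fin c) v) ≠ φ (childV ⟨2, by omega⟩ v) :=
          fun hcon => childV_ne (by simp [Fin.ext_iff]) v (hinj hcon)
        have tri := sphere3 d01 d02 d12
          hcmem.1 hcmem.2.1 hcmem.2.2
          hφmem.1 hφmem.2.1 hφmem.2.2
          hψmem.1 hψmem.2.1 hψmem.2.2
        have hgoal : φ (vertOfInt v) = ψ (vertOfInt v) := by
          have hbv := hbit v
          unfold bitP at hbv
          rw [hS] at hbv
          by_cases hb : φ (vertOfInt v) = canonPt (Sv hc α ψ v)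
          · have : ψ (vertOfInt v) = canonPt (Sv hc α ψ v) := by rw [← hbv]; exact hb
            rw [hb, this]
          · have hb' : ψ (vertOfInt v) ≠ canonPt (Sv hc α ψ v) := by rw [hbv] at hb; exact hb
            rw [← hS] at hb hb'
            rcases tri with h1 | h1 | h1
            · exact absurd h1.symm hb
            · exact absurd h1.symm hb'
            · exact h1
        exact hgoal
  funext w
  obtain ⟨l, hl⟩ := w
  exact main h l hl (by omega)

lemma configs_finite_s13 (c h : ℕ) (α : ℝ) (E : Finset Pt3) :
    (distTreeConfigs3 c h α E).Finite := by
  apply Set.Finite.subset (Set.Finite.pi (fun _ : TreeVert c h => E.finite_toSet))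
  intro φ hφ
  rw [Set.mem_univ_pi]
  exact fun v => hφ.1 v

lemma configs_card_le {c h : ℕ} (hc : 3 ≤ c) {α : ℝ} (hα : 0 < α) (E : Finset Pt3) :
    (distTreeConfigs3 c h α E).ncard ≤ E.card ^ (c ^ h) * 2 ^ (Nat.card (IntV c h)) := by
  classical
  set S := distTreeConfigs3 c h α E with hSdef
  let G : S → (LeafV c h → E) × (IntV c h → Prop) := fun φS =>
    (fun l => ⟨φS.1 (vertOfLeaf l), φS.2.1 (vertOfLeaf l)⟩, fun v => bitP hc α φS.1 v)
  have hGinj : Function.Injective G := by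
    rintro ⟨φ, hφ⟩ ⟨ψ, hψ⟩ hEq
    simp only [G, Prod.mk.injEq] at hEq
    apply Subtype.ext
    apply recon hc hα hφ hψ
    · intro l
      exact Subtype.ext_iff.mp (congrFun hEq.1 l)
    · intro v
      exact congrFun hEq.2 v
  have h1 : S.ncard = Nat.card S := (Nat.card_coe_set_eq S).symm
  have h2 : Nat.card S ≤ Nat.card ((LeafV c h → E) × (IntV c h → Prop)) :=
    Nat.card_le_card_of_injective G hGinj
  have h3 : Nat.card ((LeafV c h → E) × (IntV c h → Prop))
      = E.card ^ (c ^ h) * 2 ^ (Nat.card (IntV c h)) := by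
    rw [Nat.card_prod, Nat.card_fun, Nat.card_fun, card_leafV,
      Nat.card_eq_finsetCard, Nat.card_eq_fintype_card (α := Prop), Fintype.card_prop]
  omega

-- ### lower bound construction

def mkPt (a b d : ℝ) : Pt3 := (WithLp.equiv 2 (∀ _ : Fin 3, ℝ)).symm ![a, b, d]

@[simp] lemma mkPt_apply_zero (a b d : ℝ) : mkPt a b d 0 = a := rfl
@[simp] lemma mkPt_apply_one (a b d : ℝ) : mkPt a b d 1 = b := rfl
@[simp] lemma mkPt_apply_two (a b d : ℝ) : mkPt a b d 2 = d := rfl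

lemma norm_mkPt_sub_sq (a b d a' b' d' : ℝ) :
    ‖mkPt a b d - mkPt a' b' d'‖ ^ 2 = (a - a') ^ 2 + (b - b') ^ 2 + (d - d') ^ 2 := by
  rw [EuclideanSpace.norm_eq]
  rw [Real.sq_sqrt (by positivity)]
  rw [Fin.sum_univ_three]
  simp only [PiLp.sub_apply, mkPt_apply_zero, mkPt_apply_one, mkPt_apply_two,
    Real.norm_eq_abs, sq_abs]

lemma norm_eq_of_sq {v : Pt3} {α : ℝ} (hα : 0 ≤ α) (hsq : ‖v‖ ^ 2 = α ^ 2) : ‖v‖ = α := by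
  have h0 : 0 ≤ ‖v‖ := norm_nonneg v
  have h1 : (‖v‖ - α) * (‖v‖ + α) = 0 := by nlinarith
  rcases mul_eq_zero.mp h1 with h | h
  · linarith
  · linarith

lemma mkPt_inj {a b d a' b' d' : ℝ} (hEq : mkPt a b d = mkPt a' b' d') :
    a = a' ∧ b = b' ∧ d = d' := by
  refine ⟨?_, ?_, ?_⟩
  · have := congrArg (fun p : Pt3 => p 0) hEq; simpa using this
  · have := congrArg (fun p : Pt3 => p 1) hEq; simpa using this
  · have := congrArg (fun p : Pt3 => p 2) hEq; simpa using this

def codeL {c : ℕ} : List (Fin c) → ℕ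
  | [] => 0
  | i :: l => i.val + 1 + (c + 1) * codeL l

lemma codeL_inj {c : ℕ} : ∀ l m : List (Fin c), codeL l = codeL m → l = m := by
  intro l
  induction l with
  | nil =>
    intro m hm
    cases m with
    | nil => rfl
    | cons j m =>
      exfalso
      simp only [codeL] at hm
      omega
  | cons i l ih =>
    intro m hm
    cases m with
    | nil =>
      exfalso
      simp only [codeL] at hm
      omega
    | cons j m =>
      simp only [codeL] at hm
      have hi : i.val + 1 < c + 1 := by have := i.2; omega
      have hj : j.val + 1 < c + 1 := by have := j.2; omega
      have hmod : i.val + 1 = j.val + 1 := by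
        have h1 : (i.val + 1 + (c + 1) * codeL l) % (c + 1) = i.val + 1 :=
          by rw [Nat.add_mul_mod_self_left, Nat.mod_eq_of_lt hi]
        have h2 : (j.val + 1 + (c + 1) * codeL m) % (c + 1) = j.val + 1 :=
          by rw [Nat.add_mul_mod_self_left, Nat.mod_eq_of_lt hj]
        rw [← h1, ← h2, hm]
      have hij : i = j := Fin.ext (by omega)
      have hcode : codeL l = codeL m := by
        have h3 : (c + 1) * codeL l = (c + 1) * codeL m := by omega
        exact Nat.eq_of_mul_eq_mul_left (by omega) h3
      rw [hij, ih m hcode]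

lemma codeL_lt {c : ℕ} : ∀ l : List (Fin c), codeL l < (c + 1) ^ (l.length + 1) := by
  intro l
  induction l with
  | nil => simp [codeL]
  | cons i l ih =>
    simp only [codeL, List.length_cons]
    have hi : i.val + 1 ≤ c := by have := i.2; omega
    have h1 : (c + 1) * codeL l ≤ (c + 1) * ((c + 1) ^ (l.length + 1) - 1) :=
      Nat.mul_le_mul_left _ (by omega)
    have h2 : 1 ≤ (c + 1) ^ (l.length + 1) := Nat.one_le_pow _ _ (by omega)
    have h3 : (c + 1) * (c + 1) ^ (l.length + 1) = (c + 1) ^ (l.length + 1 + 1) := by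
      rw [pow_succ]
      ring
    calc i.val + 1 + (c + 1) * codeL l
        ≤ c + (c + 1) * ((c + 1) ^ (l.length + 1) - 1) := by omega
      _ = c + ((c + 1) * (c + 1) ^ (l.length + 1) - (c + 1)) := by
          rw [Nat.mul_sub_one]
      _ < (c + 1) ^ (l.length + 1 + 1) := by
          rw [← h3]
          have h4 : c + 1 ≤ (c + 1) * (c + 1) ^ (l.length + 1) :=
            Nat.le_mul_of_pos_right _ (by positivity)
          omega

def tval {c : ℕ} (M : ℕ) (a : Fin c) (j : Fin M) : ℝ := ((a.val * M + j.val + 1 : ℕ) : ℝ)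

lemma tval_pos {c : ℕ} (M : ℕ) (a : Fin c) (j : Fin M) : 0 < tval M a j := by
  rw [tval]
  exact_mod_cast Nat.succ_pos _

def Pmap (c : ℕ) (α δ : ℝ) (l : List (Fin c)) : Pt3 :=
  mkPt (δ * (codeL l : ℝ)) (Ycoord c α δ l) 0
where
  Ycoord (c : ℕ) (α δ : ℝ) : List (Fin c) → ℝ
  | [] => 0
  | i :: l => Ycoord c α δ l +
      Real.sqrt (α ^ 2 - (δ * (codeL (i :: l) : ℝ) - δ * (codeL l : ℝ)) ^ 2)

def Qmap (c : ℕ) (α δ : ℝ) (M : ℕ) (p : List (Fin c)) (a : Fin c) (j : Fin M) : Pt3 :=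
  mkPt (δ * (codeL p : ℝ))
    (Pmap.Ycoord c α δ p + α * ((1 - tval M a j ^ 2) / (1 + tval M a j ^ 2)))
    (α * (2 * tval M a j / (1 + tval M a j ^ 2)))

lemma X_bound {c h : ℕ} {α δ : ℝ} (hα : 0 < α) (hδ : δ = α / (2 * ((c : ℝ) + 1) ^ (h + 1)))
    (l : List (Fin c)) (hl : l.length ≤ h) :
    0 ≤ δ * (codeL l : ℝ) ∧ δ * (codeL l : ℝ) < α / 2 := by
  have hBr : (0:ℝ) < ((c : ℝ) + 1) ^ (h + 1) := by positivity
  have hδ0 : 0 < δ := by rw [hδ]; positivity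
  constructor
  · positivity
  · have hcode : (codeL l : ℝ) < ((c : ℝ) + 1) ^ (h + 1) := by
      have h1 : codeL l < (c + 1) ^ (l.length + 1) := codeL_lt l
      have h2 : (c + 1) ^ (l.length + 1) ≤ (c + 1) ^ (h + 1) :=
        Nat.pow_le_pow_right (by omega) (by omega)
      have h3 : codeL l < (c + 1) ^ (h + 1) := lt_of_lt_of_le h1 h2
      calc (codeL l : ℝ) < (((c + 1) ^ (h + 1) : ℕ) : ℝ) := by exact_mod_cast h3
        _ = ((c : ℝ) + 1) ^ (h + 1) := by push_cast; ring
    calc δ * (codeL l : ℝ) < δ * (((c : ℝ) + 1) ^ (h + 1)) := by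
          exact mul_lt_mul_of_pos_left hcode hδ0
      _ = α / 2 := by rw [hδ]; field_simp
lemma P_edge {c h : ℕ} {α δ : ℝ} (hα : 0 < α) (hδ : δ = α / (2 * ((c : ℝ) + 1) ^ (h + 1)))
    (i : Fin c) (l : List (Fin c)) (hl : l.length + 1 ≤ h) :
    ‖Pmap c α δ (i :: l) - Pmap c α δ l‖ = α := by
  apply norm_eq_of_sq hα.le
  rw [Pmap, Pmap, norm_mkPt_sub_sq]
  have hb1 := X_bound hα hδ (i :: l) (by simpa using hl)
  have hb2 := X_bound hα hδ l (by omega)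
  have hsq : (δ * (codeL (i :: l) : ℝ) - δ * (codeL l : ℝ)) ^ 2 < α ^ 2 := by
    nlinarith [hb1.1, hb1.2, hb2.1, hb2.2]
  simp only [Pmap.Ycoord]
  rw [show Pmap.Ycoord c α δ l +
      Real.sqrt (α ^ 2 - (δ * (codeL (i :: l) : ℝ) - δ * (codeL l : ℝ)) ^ 2) -
      Pmap.Ycoord c α δ l =
      Real.sqrt (α ^ 2 - (δ * (codeL (i :: l) : ℝ) - δ * (codeL l : ℝ)) ^ 2) by ring]
  rw [Real.sq_sqrt (by nlinarith [hsq])]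
  ring

lemma Q_dist {c : ℕ} {α δ : ℝ} (hα : 0 < α) {M : ℕ} (p : List (Fin c)) (a : Fin c)
    (j : Fin M) : ‖Qmap c α δ M p a j - Pmap c α δ p‖ = α := by
  apply norm_eq_of_sq hα.le
  rw [Qmap, Pmap, norm_mkPt_sub_sq]
  set t := tval M a j with ht
  have ht1 : (0:ℝ) < 1 + t ^ 2 := by positivity
  field_simp
  ring

lemma P_inj {c : ℕ} {α δ : ℝ} (hδ0 : 0 < δ) {l m : List (Fin c)}
    (hEq : Pmap c α δ l = Pmap c α δ m) : l = m := by
  have h1 := (mkPt_inj hEq).1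
  have h2 := mul_left_cancel₀ (ne_of_gt hδ0) h1
  exact codeL_inj l m (by exact_mod_cast h2)

lemma tval_inj {c : ℕ} {M : ℕ} {a a' : Fin c} {j j' : Fin M}
    (hEq : tval M a j = tval M a' j') : a = a' ∧ j = j' := by
  rw [tval, tval] at hEq
  have h1 : a.val * M + j.val + 1 = a'.val * M + j'.val + 1 := by exact_mod_cast hEq
  have hj : j.val < M := j.2
  have hj' : j'.val < M := j'.2
  have h2 : a.val * M + j.val = a'.val * M + j'.val := by omega
  have hjj : j.val = j'.val := by
    have e1 : (j.val + a.val * M) % M = j.val % M := Nat.add_mul_mod_self_right j.val a.val M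
    have e2 : (j'.val + a'.val * M) % M = j'.val % M := Nat.add_mul_mod_self_right j'.val a'.val M
    have e3 : j.val + a.val * M = j'.val + a'.val * M := by omega
    rw [Nat.mod_eq_of_lt hj] at e1
    rw [Nat.mod_eq_of_lt hj'] at e2
    rw [← e1, ← e2, e3]
  have haa : a.val = a'.val := by
    have hM : 0 < M := by omega
    have h3 : a.val * M = a'.val * M := by omega
    exact Nat.eq_of_mul_eq_mul_right hM h3
  exact ⟨Fin.ext haa, Fin.ext hjj⟩

lemma frac_inj {s t : ℝ} (hs : 0 < s) (ht : 0 < t)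
    (hEq : (1 - s ^ 2) / (1 + s ^ 2) = (1 - t ^ 2) / (1 + t ^ 2)) : s = t := by
  have hs1 : (0:ℝ) < 1 + s ^ 2 := by positivity
  have ht1 : (0:ℝ) < 1 + t ^ 2 := by positivity
  have h1 : (1 - s ^ 2) * (1 + t ^ 2) = (1 - t ^ 2) * (1 + s ^ 2) :=
    (div_eq_div_iff (ne_of_gt hs1) (ne_of_gt ht1)).mp hEq
  have h2 : (s - t) * (s + t) = 0 := by nlinarith
  rcases mul_eq_zero.mp h2 with h | h
  · linarith
  · linarith

lemma Q_inj {c : ℕ} {α δ : ℝ} (hα : 0 < α) (hδ0 : 0 < δ) {M : ℕ}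
    {p p' : List (Fin c)} {a a' : Fin c} {j j' : Fin M}
    (hEq : Qmap c α δ M p a j = Qmap c α δ M p' a' j') : p = p' ∧ a = a' ∧ j = j' := by
  obtain ⟨h1, h2, h3⟩ := mkPt_inj hEq
  have hp : p = p' := by
    apply codeL_inj
    have := mul_left_cancel₀ (ne_of_gt hδ0) h1
    exact_mod_cast this
  subst hp
  have h2' : (1 - tval M a j ^ 2) / (1 + tval M a j ^ 2)
      = (1 - tval M a' j' ^ 2) / (1 + tval M a' j' ^ 2) := by
    have h4 := add_left_cancel h2
    exact mul_left_cancel₀ (ne_of_gt hα) h4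
  have ht := frac_inj (tval_pos M a j) (tval_pos M a' j') h2'
  obtain ⟨ha, hj⟩ := tval_inj ht
  exact ⟨rfl, ha, hj⟩

lemma Q_z_pos {c : ℕ} {α δ : ℝ} (hα : 0 < α) {M : ℕ} (p : List (Fin c)) (a : Fin c)
    (j : Fin M) : 0 < (Qmap c α δ M p a j) 2 := by
  rw [Qmap, mkPt_apply_two]
  have := tval_pos M a j
  positivity

lemma P_z_zero {c : ℕ} {α δ : ℝ} (l : List (Fin c)) : (Pmap c α δ l) 2 = 0 := rfl

def QmapL (c : ℕ) (α δ : ℝ) (M : ℕ) : List (Fin c) → Fin M → Pt3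
  | [], _ => 0
  | a :: p, j => Qmap c α δ M p a j

def phiMap (c h : ℕ) (α δ : ℝ) (M : ℕ) (τ : LeafV c h → Fin M) (v : TreeVert c h) : Pt3 :=
  if hv : v.1.length = h then QmapL c α δ M v.1 (τ ⟨v.1, hv⟩) else Pmap c α δ v.1

lemma lower_construction {c h : ℕ} (hc : 3 ≤ c) (hh : 1 ≤ h) {α : ℝ} (hα : 0 < α)
    (M : ℕ) :
    ∃ E0 : Finset Pt3,
      E0.card ≤ (c + 1) ^ (h + 1) + (c + 1) ^ (h + 1) * c * M ∧
      (∀ p ∈ E0, 0 ≤ p 2) ∧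
      M ^ (c ^ h) ≤ (distTreeConfigs3 c h α E0).ncard := by
  rcases Nat.eq_zero_or_pos M with hM | hM
  · refine ⟨∅, by simp, by simp, ?_⟩
    subst hM
    rw [Nat.zero_pow (by positivity)]
    exact Nat.zero_le _
  set δ : ℝ := α / (2 * ((c : ℝ) + 1) ^ (h + 1)) with hδ
  have hδ0 : 0 < δ := by rw [hδ]; positivity
  classical
  set Sint : Finset (List (Fin c)) := (List.finite_length_le (Fin c) h).toFinset with hSint
  have hSintMem : ∀ l : List (Fin c), l ∈ Sint ↔ l.length ≤ h := by
    intro l; rw [hSint, Set.Finite.mem_toFinset]; rfl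
  have hSintCard : Sint.card ≤ (c + 1) ^ (h + 1) := by
    have := Finset.card_le_card_of_injOn (f := fun l => codeL l)
      (s := Sint) (t := Finset.range ((c + 1) ^ (h + 1)))
      (fun l hl => by
        simp only [Finset.coe_range, Set.mem_Iio]
        calc codeL l < (c + 1) ^ (l.length + 1) := codeL_lt l
          _ ≤ (c + 1) ^ (h + 1) :=
            Nat.pow_le_pow_right (by omega) (by have := (hSintMem l).mp hl; omega))
      (fun l _ m _ hlm => codeL_inj l m hlm)
    simpa using this
  set SQ : Finset Pt3 := Finset.image
      (fun x : List (Fin c) × Fin c × Fin M => Qmap c α δ M x.1 x.2.1 x.2.2)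
      (Sint ×ˢ (Finset.univ ×ˢ Finset.univ)) with hSQ
  set E0 : Finset Pt3 := Sint.image (Pmap c α δ) ∪ SQ with hE0
  refine ⟨E0, ?_, ?_, ?_⟩
  · -- cardinality bound
    calc E0.card ≤ (Sint.image (Pmap c α δ)).card + SQ.card := Finset.card_union_le _ _
      _ ≤ Sint.card + (Sint ×ˢ ((Finset.univ : Finset (Fin c)) ×ˢ
            (Finset.univ : Finset (Fin M)))).card := by
          gcongr <;> exact Finset.card_image_le
      _ ≤ (c + 1) ^ (h + 1) + (c + 1) ^ (h + 1) * c * M := by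
          rw [Finset.card_product, Finset.card_product, Finset.card_univ, Finset.card_univ,
            Fintype.card_fin, Fintype.card_fin]
          have h8 : Sint.card * (c * M) ≤ (c + 1) ^ (h + 1) * (c * M) :=
            Nat.mul_le_mul_right _ hSintCard
          have h9 : (c + 1) ^ (h + 1) * c * M = (c + 1) ^ (h + 1) * (c * M) := by ring
          omega
  · -- z-coordinates nonnegative
    intro p hp
    rw [hE0, Finset.mem_union] at hp
    rcases hp with hp | hp
    · rw [Finset.mem_image] at hp
      obtain ⟨l, -, rfl⟩ := hp
      rw [P_z_zero]
    · rw [hSQ, Finset.mem_image] at hp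
      obtain ⟨x, -, rfl⟩ := hp
      exact (Q_z_pos hα x.1 x.2.1 x.2.2).le
  · -- many configurations
    set Φ : (LeafV c h → Fin M) → (TreeVert c h → Pt3) := phiMap c h α δ M with hΦ
    have hmemP : ∀ l : List (Fin c), l.length ≤ h → Pmap c α δ l ∈ E0 := by
      intro l hl
      rw [hE0, Finset.mem_union]
      exact Or.inl (Finset.mem_image.mpr ⟨l, (hSintMem l).mpr hl, rfl⟩)
    have hmemQ : ∀ (p : List (Fin c)), p.length ≤ h → ∀ (a : Fin c) (j : Fin M),
        Qmap c α δ M p a j ∈ E0 := by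
      intro p hp a j
      rw [hE0, Finset.mem_union]
      refine Or.inr (Finset.mem_image.mpr ⟨(p, a, j), ?_, rfl⟩)
      rw [Finset.mem_product]
      exact ⟨(hSintMem p).mpr hp, by simp [Finset.mem_product]⟩
    have hconfig : ∀ τ : LeafV c h → Fin M, Φ τ ∈ distTreeConfigs3 c h α E0 := by
      intro τ
      refine ⟨?_, ?_, ?_⟩
      · -- membership
        rintro ⟨l, hl⟩
        rw [hΦ]; unfold phiMap
        by_cases hv : l.length = h
        · rw [dif_pos hv]
          cases l with
          | nil => exact absurd hv (by simp; omega)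
          | cons a p =>
            simp only [QmapL]
            apply hmemQ
            simp only [List.length_cons] at hv
            omega
        · rw [dif_neg hv]
          exact hmemP l hl
      · -- injectivity
        rintro ⟨l, hl⟩ ⟨m, hm⟩ heq
        rw [hΦ] at heq; unfold phiMap at heq
        apply Subtype.ext
        simp only
        by_cases hv : l.length = h <;> by_cases hw : m.length = h
        · rw [dif_pos hv, dif_pos hw] at heq
          cases l with
          | nil => exact absurd hv (by simp; omega)
          | cons a p =>
            cases m with
            | nil => exact absurd hw (by simp; omega)
            | cons b q =>
              simp only [QmapL] at heq
              obtain ⟨hpq, hab, -⟩ := Q_inj hα hδ0 heq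
              rw [hpq, hab]
        · rw [dif_pos hv, dif_neg hw] at heq
          exfalso
          cases l with
          | nil => exact absurd hv (by simp; omega)
          | cons a p =>
            simp only [QmapL] at heq
            have h1 := Q_z_pos (δ := δ) (M := M) hα p a (τ ⟨a :: p, hv⟩)
            rw [heq, P_z_zero] at h1
            exact lt_irrefl 0 h1
        · rw [dif_neg hv, dif_pos hw] at heq
          exfalso
          cases m with
          | nil => exact absurd hw (by simp; omega)
          | cons b q =>
            simp only [QmapL] at heq
            have h1 := Q_z_pos (δ := δ) (M := M) hα q b (τ ⟨b :: q, hw⟩)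
            rw [← heq, P_z_zero] at h1
            exact lt_irrefl 0 h1
        · rw [dif_neg hv, dif_neg hw] at heq
          exact P_inj hδ0 heq
      · -- distances
        have hstep : ∀ (i : Fin c) (l : List (Fin c)) (hil : (i :: l).length ≤ h)
            (hl : l.length ≤ h),
            ‖Φ τ ⟨i :: l, hil⟩ - Φ τ ⟨l, hl⟩‖ = α := by
          intro i l hil hl
          have hlth : ¬ l.length = h := by
            simp only [List.length_cons] at hil
            omega
          rw [hΦ]; unfold phiMap
          simp only
          rw [dif_neg hlth]
          by_cases hv : (i :: l).length = h
          · rw [dif_pos hv]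
            simp only [QmapL]
            exact Q_dist hα l i _
          · rw [dif_neg hv]
            apply P_edge hα hδ
            simp only [List.length_cons] at hv hil
            omega
        rintro ⟨l, hl⟩ ⟨m, hm⟩ hadj
        rcases hadj with ⟨i, hi⟩ | ⟨i, hi⟩
        · simp only at hi
          subst hi
          exact hstep i m hl hm
        · simp only at hi
          subst hi
          rw [norm_sub_rev]
          exact hstep i l hm hl
    have hΦinj : Function.Injective Φ := by
      intro τ τ' heq
      funext lf
      obtain ⟨l, hlf⟩ := lf
      have h1 := congrFun heq ⟨l, hlf.le⟩
      rw [hΦ] at h1; unfold phiMap at h1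
      simp only at h1
      rw [dif_pos hlf, dif_pos hlf] at h1
      cases l with
      | nil => exact absurd hlf (by simp; omega)
      | cons a p =>
        simp only [QmapL] at h1
        exact (Q_inj hα hδ0 h1).2.2
    calc M ^ c ^ h = Nat.card (LeafV c h → Fin M) := by
          rw [Nat.card_fun, card_leafV, Nat.card_eq_fintype_card, Fintype.card_fin]
      _ = (Set.range Φ).ncard := by
          rw [← Set.image_univ, Set.ncard_image_of_injective _ hΦinj, Set.ncard_univ]
      _ ≤ (distTreeConfigs3 c h α E0).ncard := by
          apply Set.ncard_le_ncard _ (configs_finite_s13 c h α E0)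
          rintro x ⟨τ, rfl⟩
          exact hconfig τ


/-- **distance configurations on perfect `c`-ary trees with constant
weight, in three dimensions.**  Fix `c ≥ 3`, `h ≥ 1`, and `α > 0`.  Then
`f₃(T_{c,h,α}; n) ≈ n^(c^h)`: there is `C > 0` such that every set of `n` points in `ℝ³`
has at most `C · n^(c^h)` distance `T_{c,h,α}`-configurations, and there are `c' > 0`
and `N` such that for every `n > N` some set of `n` points in `ℝ³` has at least
`c' · n^(c^h)` of them. -/
theorem distance_tree_bounds_threeDim (c h : ℕ) (hc : 3 ≤ c) (hh : 1 ≤ h) (α : ℝ)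
    (hα : 0 < α) :
    (∃ C : ℝ, 0 < C ∧ ∀ (n : ℕ) (E : Finset Pt3), E.card = n →
      ((distTreeConfigs3 c h α E).ncard : ℝ) ≤ C * (n : ℝ) ^ (c ^ h)) ∧
    (∃ c' : ℝ, 0 < c' ∧ ∃ N : ℕ, ∀ n : ℕ, N < n →
      ∃ E : Finset Pt3, E.card = n ∧
        c' * (n : ℝ) ^ (c ^ h) ≤ ((distTreeConfigs3 c h α E).ncard : ℝ)) := by
  constructor
  · -- upper bound
    refine ⟨(2 : ℝ) ^ (Nat.card (IntV c h)), by positivity, ?_⟩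
    intro n E hEn
    have h1 := configs_card_le (h := h) hc hα E
    calc ((distTreeConfigs3 c h α E).ncard : ℝ)
        ≤ ((E.card ^ (c ^ h) * 2 ^ (Nat.card (IntV c h)) : ℕ) : ℝ) := by exact_mod_cast h1
      _ = (2 : ℝ) ^ (Nat.card (IntV c h)) * (n : ℝ) ^ (c ^ h) := by
          push_cast [hEn]
          ring
  · -- lower bound
    set B : ℕ := (c + 1) ^ (h + 1) with hB
    set D : ℕ := 2 * (B + B * c) with hD
    have hB1 : 1 ≤ B := Nat.one_le_pow _ _ (by omega)
    have hD1 : 1 ≤ D := by omega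
    refine ⟨(1 / (2 * (D : ℝ))) ^ (c ^ h), by positivity, 4 * D, ?_⟩
    intro n hn
    set M : ℕ := n / D with hMdef
    have hM4 : 4 ≤ M := by
      rw [hMdef]
      rw [Nat.le_div_iff_mul_le (by omega)]
      omega
    have hM1 : 1 ≤ M := by omega
    obtain ⟨E0, hE0card, hE0z, hE0count⟩ := lower_construction hc hh hα M
    have hDM : D * M ≤ n := by
      rw [hMdef, mul_comm]
      exact Nat.div_mul_le_self n D
    have hE0n : E0.card ≤ n := by
      rw [← hB] at hE0card
      have key : B + B * c * M ≤ D * M := by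
        rw [hD]
        have e1 : 2 * (B + B * c) * M = 2 * (B * M) + 2 * (B * c * M) := by ring
        have e2 : B ≤ B * M := Nat.le_mul_of_pos_right _ (by omega)
        omega
      omega
    classical
    set pad : Finset Pt3 :=
      (Finset.range (n - E0.card)).image (fun k : ℕ => mkPt (k : ℝ) 0 (-1)) with hpad
    have hpadcard : pad.card = n - E0.card := by
      rw [hpad, Finset.card_image_of_injOn, Finset.card_range]
      intro k _ k' _ hkk
      have := (mkPt_inj hkk).1
      exact_mod_cast this
    have hdisj : Disjoint E0 pad := by
      rw [Finset.disjoint_left]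
      intro p hp hppad
      rw [hpad, Finset.mem_image] at hppad
      obtain ⟨k, -, rfl⟩ := hppad
      have h2 := hE0z _ hp
      rw [mkPt_apply_two] at h2
      linarith
    refine ⟨E0 ∪ pad, ?_, ?_⟩
    · rw [Finset.card_union_of_disjoint hdisj, hpadcard]
      omega
    · have hsub : distTreeConfigs3 c h α E0 ⊆ distTreeConfigs3 c h α (E0 ∪ pad) := by
        rintro φ ⟨hmem, hinj, hdist⟩
        exact ⟨fun v => Finset.mem_union_left _ (hmem v), hinj, hdist⟩
      have hcount : M ^ (c ^ h) ≤ (distTreeConfigs3 c h α (E0 ∪ pad)).ncard :=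
        le_trans hE0count (Set.ncard_le_ncard hsub (configs_finite_s13 c h α _))
      have hMreal : (n : ℝ) / (2 * (D : ℝ)) ≤ (M : ℝ) := by
        have h1 : D * M + n % D = n := Nat.div_add_mod n D
        have h2 : n % D < D := Nat.mod_lt n (by omega)
        have h3 : n ≤ 2 * D * M := by nlinarith [hM1]
        have h4 : (n : ℝ) ≤ 2 * (D : ℝ) * (M : ℝ) := by exact_mod_cast h3
        rw [div_le_iff₀ (by positivity)]
        linarith
      calc (1 / (2 * (D : ℝ))) ^ (c ^ h) * (n : ℝ) ^ (c ^ h)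
          = ((n : ℝ) / (2 * (D : ℝ))) ^ (c ^ h) := by
            rw [← mul_pow]
            congr 1
            ring
        _ ≤ ((M : ℕ) : ℝ) ^ (c ^ h) := by
            apply pow_le_pow_left₀ (by positivity) hMreal
        _ ≤ ((distTreeConfigs3 c h α (E0 ∪ pad)).ncard : ℝ) := by
            exact_mod_cast hcount
end
end

section
/- Fix positive real numbers α₁, α₂. Then: (i) there is a constant C > 0 such that for every n and every set E of n points in ℝ², the number of ordered triples (x₁, x₂, x₃) of pairwise distinct points of E with ‖x₁ − x₂‖ = α₁ and ‖x₂ − x₃‖ = α₂ is at most C · n²; and (ii) there exist a constant c > 0 and N such that for every n > N there is a set E of n points in ℝ² containing at least c · n² such triples. That is, the maximum number of distance hinges of type (α₁, α₂) in an n-point planar set is ≈ n². -/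
open scoped InnerProductSpace

noncomputable section

/-- The set of distance hinges (2-chains) of type `(α₁, α₂)` in a point set `E`:
ordered triples `(x₁, x₂, x₃)` of pairwise distinct points of `E` with
`‖x₁ − x₂‖ = α₁` and `‖x₂ − x₃‖ = α₂`. -/
def distHinges (E : Finset Pt2) (α₁ α₂ : ℝ) : Set (Pt2 × Pt2 × Pt2) :=
  {x | x.1 ∈ E ∧ x.2.1 ∈ E ∧ x.2.2 ∈ E ∧
    x.1 ≠ x.2.1 ∧ x.1 ≠ x.2.2 ∧ x.2.1 ≠ x.2.2 ∧
    ‖x.1 - x.2.1‖ = α₁ ∧ ‖x.2.1 - x.2.2‖ = α₂}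

/- ### Auxiliary material -/

/-- If `u` and `w` are both orthogonal to a nonzero vector `v` in the plane,
they are parallel. -/
lemma parallel_of_orth {v u w : Pt2} (hv : v ≠ 0) (hu : u ≠ 0)
    (h1 : ⟪u, v⟫_ℝ = 0) (h2 : ⟪w, v⟫_ℝ = 0) : ∃ t : ℝ, w = t • u := by
  have hK : Module.finrank ℝ ((ℝ ∙ v)ᗮ : Submodule ℝ Pt2) = 1 := by
    have := Submodule.finrank_add_finrank_orthogonal (K := (ℝ ∙ v)) (𝕜 := ℝ)
    rw [finrank_span_singleton hv, finrank_euclideanSpace_fin] at this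
    omega
  have hu' : u ∈ (ℝ ∙ v)ᗮ := Submodule.mem_orthogonal_singleton_iff_inner_left.2 h1
  have hw' : w ∈ (ℝ ∙ v)ᗮ := Submodule.mem_orthogonal_singleton_iff_inner_left.2 h2
  have hle : (ℝ ∙ u) ≤ (ℝ ∙ v)ᗮ := by
    rw [Submodule.span_singleton_le_iff_mem]; exact hu'
  have heq : (ℝ ∙ u) = (ℝ ∙ v)ᗮ :=
    Submodule.eq_of_le_of_finrank_le hle (by rw [hK, finrank_span_singleton hu])
  have : w ∈ (ℝ ∙ u) := heq ▸ hw'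
  obtain ⟨t, ht⟩ := Submodule.mem_span_singleton.1 this
  exact ⟨t, ht.symm⟩

/-- Two distinct circles in the plane have at most two common points: there are no
three pairwise distinct points each equidistant from two distinct centers. -/
lemma no_three_on_two_circles {a b x y z : Pt2} (hab : a ≠ b)
    (hxy : x ≠ y) (hxz : x ≠ z) (hyz : y ≠ z)
    (hax : ‖a - x‖ = ‖a - y‖) (hay : ‖a - y‖ = ‖a - z‖)
    (hbx : ‖b - x‖ = ‖b - y‖) (hby : ‖b - y‖ = ‖b - z‖) : False := by
  have q1 : ⟪a - x, a - x⟫_ℝ = ⟪a - y, a - y⟫_ℝ := by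
    rw [real_inner_self_eq_norm_sq, real_inner_self_eq_norm_sq, hax]
  have q2 : ⟪a - y, a - y⟫_ℝ = ⟪a - z, a - z⟫_ℝ := by
    rw [real_inner_self_eq_norm_sq, real_inner_self_eq_norm_sq, hay]
  have q3 : ⟪b - x, b - x⟫_ℝ = ⟪b - y, b - y⟫_ℝ := by
    rw [real_inner_self_eq_norm_sq, real_inner_self_eq_norm_sq, hbx]
  have q4 : ⟪b - y, b - y⟫_ℝ = ⟪b - z, b - z⟫_ℝ := by
    rw [real_inner_self_eq_norm_sq, real_inner_self_eq_norm_sq, hby]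
  simp only [inner_sub_left, inner_sub_right] at q1 q2 q3 q4
  have cxa : ⟪x, a⟫_ℝ = ⟪a, x⟫_ℝ := real_inner_comm _ _
  have cya : ⟪y, a⟫_ℝ = ⟪a, y⟫_ℝ := real_inner_comm _ _
  have cza : ⟪z, a⟫_ℝ = ⟪a, z⟫_ℝ := real_inner_comm _ _
  have cxb : ⟪x, b⟫_ℝ = ⟪b, x⟫_ℝ := real_inner_comm _ _
  have cyb : ⟪y, b⟫_ℝ = ⟪b, y⟫_ℝ := real_inner_comm _ _
  have czb : ⟪z, b⟫_ℝ = ⟪b, z⟫_ℝ := real_inner_comm _ _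
  rw [cxa, cya] at q1
  rw [cya, cza] at q2
  rw [cxb, cyb] at q3
  rw [cyb, czb] at q4
  have o1 : ⟪y - x, a - b⟫_ℝ = 0 := by
    simp only [inner_sub_left, inner_sub_right]
    have c1 : ⟪y, a⟫_ℝ = ⟪a, y⟫_ℝ := real_inner_comm _ _
    have c2 : ⟪x, a⟫_ℝ = ⟪a, x⟫_ℝ := real_inner_comm _ _
    have c3 : ⟪y, b⟫_ℝ = ⟪b, y⟫_ℝ := real_inner_comm _ _
    have c4 : ⟪x, b⟫_ℝ = ⟪b, x⟫_ℝ := real_inner_comm _ _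
    rw [c1, c2, c3, c4]; linarith
  have o2 : ⟪z - y, a - b⟫_ℝ = 0 := by
    simp only [inner_sub_left, inner_sub_right]
    have c1 : ⟪z, a⟫_ℝ = ⟪a, z⟫_ℝ := real_inner_comm _ _
    have c2 : ⟪y, a⟫_ℝ = ⟪a, y⟫_ℝ := real_inner_comm _ _
    have c3 : ⟪z, b⟫_ℝ = ⟪b, z⟫_ℝ := real_inner_comm _ _
    have c4 : ⟪y, b⟫_ℝ = ⟪b, y⟫_ℝ := real_inner_comm _ _
    rw [c1, c2, c3, c4]; linarith
  have hv : a - b ≠ 0 := sub_ne_zero.2 hab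
  have hu : y - x ≠ 0 := sub_ne_zero.2 (Ne.symm hxy)
  obtain ⟨t, ht⟩ := parallel_of_orth hv hu o1 o2
  have hz : z = y + t • (y - x) := by
    have h' := ht
    rw [sub_eq_iff_eq_add] at h'
    rw [h']; abel
  subst hz
  simp only [inner_add_left, inner_add_right, inner_sub_left, inner_sub_right,
    real_inner_smul_left, real_inner_smul_right] at q2
  have cxy : ⟪x, y⟫_ℝ = ⟪y, x⟫_ℝ := real_inner_comm _ _
  rw [cxy] at q2
  have hQ : (0:ℝ) < ⟪y - x, y - x⟫_ℝ := by
    rw [real_inner_self_eq_norm_sq]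
    exact pow_pos (norm_pos_iff.2 hu) 2
  have hQ' : ⟪y - x, y - x⟫_ℝ = ⟪y,y⟫_ℝ - 2*⟪y,x⟫_ℝ + ⟪x,x⟫_ℝ := by
    simp only [inner_sub_left, inner_sub_right]
    rw [cxy]; ring
  have key : t * (t + 1) * (⟪y,y⟫_ℝ - 2*⟪y,x⟫_ℝ + ⟪x,x⟫_ℝ) = 0 := by
    linear_combination t * q1 - q2
  rw [← hQ'] at key
  rcases mul_eq_zero.1 key with h | h
  · rcases mul_eq_zero.1 h with h0 | h1
    · apply hyz; rw [h0]; simp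
    · apply hxz
      have : t = -1 := by linarith
      rw [this]; simp
  · linarith

open Classical in
/-- The hinges of `E`, as a finset. -/
def hingeFinset (E : Finset Pt2) (α₁ α₂ : ℝ) : Finset (Pt2 × Pt2 × Pt2) :=
  (E ×ˢ E ×ˢ E).filter (fun x => x.1 ≠ x.2.1 ∧ x.1 ≠ x.2.2 ∧ x.2.1 ≠ x.2.2 ∧
    ‖x.1 - x.2.1‖ = α₁ ∧ ‖x.2.1 - x.2.2‖ = α₂)

lemma mem_hingeFinset {E : Finset Pt2} {α₁ α₂ : ℝ} {x : Pt2 × Pt2 × Pt2} :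
    x ∈ hingeFinset E α₁ α₂ ↔ x ∈ distHinges E α₁ α₂ := by
  simp only [hingeFinset, distHinges, Finset.mem_filter, Finset.mem_product,
    Set.mem_setOf_eq]
  tauto

lemma distHinges_eq_coe (E : Finset Pt2) (α₁ α₂ : ℝ) :
    distHinges E α₁ α₂ = ↑(hingeFinset E α₁ α₂) := by
  ext x
  rw [Finset.mem_coe, mem_hingeFinset]

/-- A point on the unit circle. -/
def ept (θ : ℝ) : Pt2 := WithLp.toLp 2 ![Real.cos θ, Real.sin θ]

lemma ept_norm (θ : ℝ) : ‖ept θ‖ = 1 := by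
  rw [EuclideanSpace.norm_eq]
  have h : ∑ i, ‖ept θ i‖^2 = 1 := by
    simp [Fin.sum_univ_two, ept, Real.norm_eq_abs, sq_abs, Real.cos_sq_add_sin_sq]
  rw [h, Real.sqrt_one]

lemma smul_ept_inj {r : ℝ} (hr : 0 < r) {θ φ : ℝ} (hθ : θ ∈ Set.Icc 0 Real.pi)
    (hφ : φ ∈ Set.Icc 0 Real.pi) (h : r • ept θ = r • ept φ) : θ = φ := by
  have h0 : (r • ept θ) 0 = (r • ept φ) 0 := by rw [h]
  have : Real.cos θ = Real.cos φ := by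
    simpa [ept, hr.ne'] using h0
  exact Real.injOn_cos hθ hφ this

/- ### Main theorem -/

/-- **distance hinges.** Fix positive reals `α₁, α₂`.  (i) There is
`C > 0` such that every set of `n` points in the plane contains at most `C · n²`
distance hinges of type `(α₁, α₂)`; (ii) there are `c > 0` and `N` such that for every
`n > N` some set of `n` points in the plane contains at least `c · n²` of them.  That
is, the maximum number of distance hinges of type `(α₁, α₂)` is `≈ n²`. -/
theorem distance_hinge_bounds (α₁ α₂ : ℝ) (h₁ : 0 < α₁) (h₂ : 0 < α₂) :
    (∃ C : ℝ, 0 < C ∧ ∀ (n : ℕ) (E : Finset Pt2), E.card = n →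
      ((distHinges E α₁ α₂).ncard : ℝ) ≤ C * (n : ℝ) ^ 2) ∧
    (∃ c : ℝ, 0 < c ∧ ∃ N : ℕ, ∀ n : ℕ, N < n →
      ∃ E : Finset Pt2, E.card = n ∧
        c * (n : ℝ) ^ 2 ≤ ((distHinges E α₁ α₂).ncard : ℝ)) := by
  classical
  constructor
  · -- Upper bound: at most 2 hinges for each pair (x₁, x₃).
    refine ⟨2, two_pos, ?_⟩
    intro n E hE
    rw [distHinges_eq_coe, Set.ncard_coe_finset]
    have hcard : (hingeFinset E α₁ α₂).card ≤ 2 * (E ×ˢ E).card := by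
      apply Finset.card_le_mul_card_image_of_maps_to
        (f := fun x : Pt2 × Pt2 × Pt2 => (x.1, x.2.2)) (t := E ×ˢ E)
      · intro x hx
        rw [mem_hingeFinset] at hx
        exact Finset.mem_product.2 ⟨hx.1, hx.2.2.1⟩
      · intro b _
        by_contra hgt
        push_neg at hgt
        obtain ⟨x, y, z, hx, hy, hz, hxy, hxz, hyz⟩ := Finset.two_lt_card_iff.1 hgt
        rw [Finset.mem_filter, mem_hingeFinset] at hx hy hz
        obtain ⟨hx1, hx2⟩ := hx
        obtain ⟨hy1, hy2⟩ := hy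
        obtain ⟨hz1, hz2⟩ := hz
        obtain ⟨ex1, ex3⟩ := Prod.ext_iff.1 hx2
        obtain ⟨ey1, ey3⟩ := Prod.ext_iff.1 hy2
        obtain ⟨ez1, ez3⟩ := Prod.ext_iff.1 hz2
        -- the middle points are pairwise distinct
        have mxy : x.2.1 ≠ y.2.1 := by
          intro h
          apply hxy
          exact Prod.ext (ex1.trans ey1.symm) (Prod.ext h (ex3.trans ey3.symm))
        have mxz : x.2.1 ≠ z.2.1 := by
          intro h
          apply hxz
          exact Prod.ext (ex1.trans ez1.symm) (Prod.ext h (ex3.trans ez3.symm))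
        have myz : y.2.1 ≠ z.2.1 := by
          intro h
          apply hyz
          exact Prod.ext (ey1.trans ez1.symm) (Prod.ext h (ey3.trans ez3.symm))
        have hab : b.1 ≠ b.2 := by
          rw [← ex1, ← ex3]; exact hx1.2.2.2.2.1
        have nx1 : ‖b.1 - x.2.1‖ = α₁ := by rw [← ex1]; exact hx1.2.2.2.2.2.2.1
        have ny1 : ‖b.1 - y.2.1‖ = α₁ := by rw [← ey1]; exact hy1.2.2.2.2.2.2.1
        have nz1 : ‖b.1 - z.2.1‖ = α₁ := by rw [← ez1]; exact hz1.2.2.2.2.2.2.1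
        have nx2 : ‖b.2 - x.2.1‖ = α₂ := by
          rw [norm_sub_rev, ← ex3]; exact hx1.2.2.2.2.2.2.2
        have ny2 : ‖b.2 - y.2.1‖ = α₂ := by
          rw [norm_sub_rev, ← ey3]; exact hy1.2.2.2.2.2.2.2
        have nz2 : ‖b.2 - z.2.1‖ = α₂ := by
          rw [norm_sub_rev, ← ez3]; exact hz1.2.2.2.2.2.2.2
        exact no_three_on_two_circles hab mxy mxz myz (nx1.trans ny1.symm)
          (ny1.trans nz1.symm) (nx2.trans ny2.symm) (ny2.trans nz2.symm)
    have hEE : (E ×ˢ E).card = n * n := by rw [Finset.card_product, hE]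
    rw [hEE] at hcard
    have : ((hingeFinset E α₁ α₂).card : ℝ) ≤ 2 * (n * n : ℕ) := by
      exact_mod_cast le_trans hcard (le_refl _)
    push_cast at this ⊢
    nlinarith [this]
  · -- Lower bound: a hinge construction with two concentric circles.
    refine ⟨1/16, by norm_num, 3, ?_⟩
    intro n hn
    have hn4 : 4 ≤ n := hn
    set k := n / 2 with hk
    set θ : ℕ → ℝ := fun i => (i : ℝ) * (Real.pi / n) with hθdef
    have hnpos : (0:ℝ) < n := by positivity
    have hθmem : ∀ i : ℕ, i ≤ n → θ i ∈ Set.Icc 0 Real.pi := by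
      intro i hi
      constructor
      · positivity
      · rw [hθdef]
        calc (i:ℝ) * (Real.pi / n) ≤ (n:ℝ) * (Real.pi / n) := by
              apply mul_le_mul_of_nonneg_right (by exact_mod_cast hi)
              positivity
          _ = Real.pi := by field_simp
    have hθinj : ∀ i j : ℕ, θ i = θ j → i = j := by
      intro i j hij
      rw [hθdef] at hij
      have hc : (0:ℝ) < Real.pi / n := by positivity
      have : (i:ℝ) = j := mul_right_cancel₀ hc.ne' hij
      exact_mod_cast this
    set f : ℕ → Pt2 := fun i =>
      if i = 0 then 0 else if i ≤ k then α₁ • ept (θ i) else α₂ • ept (θ i) with hfdef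
    have hf0 : f 0 = 0 := by simp [hfdef]
    set r : ℕ → ℝ := fun i => if i ≤ k then α₁ else α₂ with hrdef
    have hrpos : ∀ i, 0 < r i := by
      intro i; rw [hrdef]; dsimp only; split <;> assumption
    have hfr : ∀ i, i ≠ 0 → f i = r i • ept (θ i) := by
      intro i hi
      rw [hfdef, hrdef]
      simp only [hi, if_false]
      split <;> rfl
    have hfnorm : ∀ i, i ≠ 0 → ‖f i‖ = r i := by
      intro i hi
      rw [hfr i hi, norm_smul, ept_norm, mul_one, Real.norm_eq_abs,
        abs_of_pos (hrpos i)]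
    have hfne0 : ∀ i, i ≠ 0 → f i ≠ 0 := by
      intro i hi h
      have := hfnorm i hi
      rw [h, norm_zero] at this
      exact (hrpos i).ne this
    have hfinj : ∀ i ∈ Finset.range n, ∀ j ∈ Finset.range n, f i = f j → i = j := by
      intro i hi j hj hij
      rw [Finset.mem_range] at hi hj
      rcases eq_or_ne i 0 with rfl | hi0
      · rcases eq_or_ne j 0 with rfl | hj0
        · rfl
        · exact absurd (hf0 ▸ hij.symm) (hfne0 j hj0)
      · rcases eq_or_ne j 0 with rfl | hj0
        · exact absurd (hf0 ▸ hij) (hfne0 i hi0)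
        · have hrij : r i = r j := by
            rw [← hfnorm i hi0, ← hfnorm j hj0, hij]
          have h' : r i • ept (θ i) = r i • ept (θ j) := by
            rw [← hfr i hi0, hij, hfr j hj0, hrij]
          have := smul_ept_inj (hrpos i) (hθmem i hi.le) (hθmem j hj.le) h'
          exact hθinj i j this
    refine ⟨(Finset.range n).image f, ?_, ?_⟩
    · rw [Finset.card_image_of_injOn, Finset.card_range]
      intro i hi j hj
      exact hfinj i hi j hj
    · set E := (Finset.range n).image f with hEdef
      rw [distHinges_eq_coe, Set.ncard_coe_finset]
      set T : Finset (ℕ × ℕ) := Finset.Icc 1 k ×ˢ Finset.Icc (k+1) (n-1) with hTdef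
      set g : ℕ × ℕ → Pt2 × Pt2 × Pt2 := fun p => (f p.1, f 0, f p.2) with hgdef
      have hkn : k < n := by omega
      have hmemE : ∀ i, i < n → f i ∈ E := by
        intro i hi
        exact Finset.mem_image_of_mem f (Finset.mem_range.2 hi)
      have hTsub : T.image g ⊆ hingeFinset E α₁ α₂ := by
        intro w hw
        obtain ⟨p, hp, rfl⟩ := Finset.mem_image.1 hw
        rw [hTdef, Finset.mem_product, Finset.mem_Icc, Finset.mem_Icc] at hp
        obtain ⟨⟨hp1, hp2⟩, hp3, hp4⟩ := hp
        have hi0 : p.1 ≠ 0 := by omega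
        have hj0 : p.2 ≠ 0 := by omega
        have hiltn : p.1 < n := by omega
        have hjltn : p.2 < n := by omega
        have hij : p.1 ≠ p.2 := by omega
        have hgp : g p = (f p.1, f 0, f p.2) := rfl
        rw [hgp, mem_hingeFinset]
        refine ⟨hmemE p.1 hiltn, hmemE 0 (by omega), hmemE p.2 hjltn, ?_, ?_, ?_, ?_, ?_⟩
        · intro h
          exact hi0 (hfinj p.1 (Finset.mem_range.2 hiltn) 0 (Finset.mem_range.2 (by omega)) h)
        · intro h
          exact hij (hfinj p.1 (Finset.mem_range.2 hiltn) p.2 (Finset.mem_range.2 hjltn) h)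
        · intro h
          exact hj0 (hfinj p.2 (Finset.mem_range.2 hjltn) 0 (Finset.mem_range.2 (by omega)) h.symm)
        · rw [hf0, sub_zero, hfnorm p.1 hi0, hrdef]
          simp [hp2]
        · rw [hf0, zero_sub, norm_neg, hfnorm p.2 hj0, hrdef]
          simp only []
          rw [if_neg (by omega)]
      have hTcard : (T.image g).card = k * (n - 1 - k) := by
        rw [Finset.card_image_of_injOn, hTdef, Finset.card_product,
          Nat.card_Icc, Nat.card_Icc]
        · congr 1 <;> omega
        · intro p hp q hq hpq
          have hp' := Finset.mem_product.1 (Finset.mem_coe.1 hp)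
          have hq' := Finset.mem_product.1 (Finset.mem_coe.1 hq)
          obtain ⟨hpa, hpb⟩ := hp'
          obtain ⟨hqa, hqb⟩ := hq'
          rw [Finset.mem_Icc] at hpa hpb hqa hqb
          have h1 : f p.1 = f q.1 := congrArg Prod.fst hpq
          have h2 : f p.2 = f q.2 := congrArg (fun w => w.2.2) hpq
          have e1 : p.1 = q.1 := hfinj p.1 (Finset.mem_range.2 (by omega))
            q.1 (Finset.mem_range.2 (by omega)) h1
          have e2 : p.2 = q.2 := hfinj p.2 (Finset.mem_range.2 (by omega))
            q.2 (Finset.mem_range.2 (by omega)) h2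
          exact Prod.ext e1 e2
      have hle : k * (n - 1 - k) ≤ (hingeFinset E α₁ α₂).card := by
        rw [← hTcard]
        exact Finset.card_le_card hTsub
      -- arithmetic
      set m := n - 1 - k with hm
      have c1 : 2 * k + 1 ≥ n := by omega
      have c2 : 2 * m + 2 ≥ n := by omega
      have r1 : (n:ℝ) ≤ 2 * k + 1 := by exact_mod_cast c1
      have r2 : (n:ℝ) ≤ 2 * m + 2 := by exact_mod_cast c2
      have r3 : (4:ℝ) ≤ n := by exact_mod_cast hn4
      have rle : (k * m : ℝ) ≤ ((hingeFinset E α₁ α₂).card : ℝ) := by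
        exact_mod_cast hle
      have harith : (1/16 : ℝ) * (n:ℝ)^2 ≤ (k:ℝ) * m := by
        nlinarith [mul_nonneg (sub_nonneg.2 r1) (sub_nonneg.2 r2),
          sq_nonneg ((n:ℝ) - 4)]
      linarith
end
end
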